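/- arXiv:1104.5195 — 7 statements merged into one kernel-verified Lean document; each statement's English description precedes it below -/
import Mathlib

section
/- Let S_λ be a weighted shift on a directed tree T with weights λ = {λ_v}_{v∈V°} ⊆ ℂ. Then S_λ is densely defined (i.e., D(S_λ) is dense in ℓ²(V)) if and only if E ⊆ D(S_λ), where E is the linear span of {e_u : u ∈ V} (equivalently, e_u ∈ D(S_λ) for every u ∈ V). -/
open scoped ENNReal NNReal Classical

noncomputable section

/-- A directed tree: a directed graph with nonempty vertex set in which each vertex has
at most one parent, there are no circuits, and the underlying undirected graph is
connected and has no cycles (i.e. is a tree). -/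
structure DirectedTree (V : Type) where
  edge : V → V → Prop
  nonempty : Nonempty V
  antisymm : ∀ u v : V, edge u v → ¬ edge v u
  parent_unique : ∀ u v w : V, edge u w → edge v w → u = v
  isTree : (SimpleGraph.fromRel edge).IsTree

namespace DirectedTree

variable {V : Type} (T : DirectedTree V)

/-- The set of children of a vertex. -/
def chi (u : V) : Set V := {v | T.edge u v}

/-- `v` has a parent. -/
def HasParent (v : V) : Prop := ∃ u, T.edge u v

/-- `V⁰`: the set of non-root vertices, i.e. the vertices possessing a parent. -/
def Vcirc : Set V := {v | T.HasParent v}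

/-- The tree is leafless if every vertex has a child. -/
def Leafless : Prop := ∀ u : V, (T.chi u).Nonempty

/-- The parent of a vertex (junk value if the vertex is a root). -/
def par (v : V) : V := if h : T.HasParent v then h.choose else T.nonempty.some

/-- The set of descendants of a vertex. -/
def desc (u : V) : Set V := {w | Relation.ReflTransGen T.edge u w}

/-- The formal weighted shift map `Λ_T` acting on all complex functions on `V`. -/
def Lam (lam : V → ℂ) (f : V → ℂ) : V → ℂ :=
  fun v => if T.HasParent v then lam v * f (T.par v) else 0

/-- The domain of the weighted shift `S_λ`. -/
def domain (lam : V → ℂ) : Set (lp (fun _ : V => ℂ) 2) :=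
  {f | Memℓp (T.Lam lam ⇑f) 2}

/-- The weighted shift `S_λ` (extended by `0` outside its domain). -/
def shift (lam : V → ℂ) (f : lp (fun _ : V => ℂ) 2) : lp (fun _ : V => ℂ) 2 :=
  if h : f ∈ T.domain lam then (⟨T.Lam lam ⇑f, h⟩ : lp (fun _ : V => ℂ) 2) else 0

/-- The domain of `S_λ²`. -/
def squareDomain (lam : V → ℂ) : Set (lp (fun _ : V => ℂ) 2) :=
  {f | f ∈ T.domain lam ∧ T.shift lam f ∈ T.domain lam}

/-- The domain of the adjoint `S_λ*`. -/
def adjDomain (lam : V → ℂ) : Set (lp (fun _ : V => ℂ) 2) :=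
  {g | ∃ h : lp (fun _ : V => ℂ) 2,
    ∀ f ∈ T.domain lam, (inner ℂ (T.shift lam f) g : ℂ) = inner ℂ f h}

/-- `S_λ` is hyponormal: it is densely defined, `D(S_λ) ⊆ D(S_λ*)` and
`‖S_λ* f‖ ≤ ‖S_λ f‖` for every `f ∈ D(S_λ)` (the adjoint value at `f` being any vector
`h` satisfying `⟪S_λ g, f⟫ = ⟪g, h⟫` for all `g ∈ D(S_λ)`; it is unique by density). -/
def IsHyponormal (lam : V → ℂ) : Prop :=
  Dense (T.domain lam) ∧ T.domain lam ⊆ T.adjDomain lam ∧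
    ∀ f ∈ T.domain lam, ∀ h : lp (fun _ : V => ℂ) 2,
      (∀ g ∈ T.domain lam, (inner ℂ (T.shift lam g) f : ℂ) = inner ℂ g h) →
        ‖h‖ ≤ ‖T.shift lam f‖

/-- `ζ_u = (Σ_{v ∈ Chi(u)} |λ_v|²)^{1/2} ∈ [0,∞]`. -/
def zeta (lam : V → ℂ) (u : V) : ℝ≥0∞ :=
  (∑' v : T.chi u, ((‖lam (v : V)‖₊ : ℝ≥0∞)) ^ 2) ^ (1/2 : ℝ)

end DirectedTree


section Aux

variable {V : Type} (T : DirectedTree V) (lam : V → ℂ)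

lemma DirectedTree.par_eq {u v : V} (h : T.edge u v) : T.par v = u := by
  have hv : T.HasParent v := ⟨u, h⟩
  rw [DirectedTree.par, dif_pos hv]
  exact T.parent_unique _ _ _ hv.choose_spec h

lemma DirectedTree.Lam_add (f g : V → ℂ) :
    T.Lam lam (f + g) = T.Lam lam f + T.Lam lam g := by
  funext v
  simp only [DirectedTree.Lam, Pi.add_apply]
  split_ifs with h
  · ring
  · simp

lemma DirectedTree.Lam_smul (c : ℂ) (f : V → ℂ) :
    T.Lam lam (c • f) = c • T.Lam lam f := by
  funext v
  simp only [DirectedTree.Lam, Pi.smul_apply, smul_eq_mul]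
  split_ifs with h
  · ring
  · simp

lemma DirectedTree.domain_add {f g : lp (fun _ : V => ℂ) 2}
    (hf : f ∈ T.domain lam) (hg : g ∈ T.domain lam) : f + g ∈ T.domain lam := by
  show Memℓp (T.Lam lam ⇑(f + g)) 2
  have : T.Lam lam ⇑(f + g) = T.Lam lam ⇑f + T.Lam lam ⇑g := by
    rw [lp.coeFn_add, T.Lam_add]
  rw [this]; exact hf.add hg

lemma DirectedTree.domain_smul {f : lp (fun _ : V => ℂ) 2} (c : ℂ)
    (hf : f ∈ T.domain lam) : c • f ∈ T.domain lam := by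
  show Memℓp (T.Lam lam ⇑(c • f)) 2
  have : T.Lam lam ⇑(c • f) = c • T.Lam lam ⇑f := by
    rw [lp.coeFn_smul, T.Lam_smul]
  rw [this]; exact hf.const_smul c

lemma DirectedTree.Lam_single (u v : V) :
    T.Lam lam (⇑(lp.single 2 u (1:ℂ))) v = if T.edge u v then lam v else 0 := by
  rw [DirectedTree.Lam]
  by_cases hv : T.HasParent v
  · rw [if_pos hv]
    by_cases hu : T.par v = u
    · have hedge : T.edge u v := by
        have h1 : T.edge (T.par v) v := by
          rw [DirectedTree.par, dif_pos hv]; exact hv.choose_spec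
        rwa [hu] at h1
      rw [if_pos hedge, hu, lp.single_apply_self, mul_one]
    · have hnedge : ¬ T.edge u v := fun h => hu (T.par_eq h)
      rw [if_neg hnedge, lp.single_apply_ne 2 u _ hu, mul_zero]
  · rw [if_neg hv, if_neg (fun h => hv ⟨u, h⟩)]

end Aux

/-- Proposition 2.1(ii): `S_λ` is densely defined iff `e_u ∈ D(S_λ)` for every `u ∈ V`. -/
theorem stmt1 {V : Type} (T : DirectedTree V) (lam : V → ℂ) :
    Dense (T.domain lam) ↔ ∀ u : V, lp.single 2 u (1:ℂ) ∈ T.domain lam := by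
  have htp : (0:ℝ) < (2 : ℝ≥0∞).toReal := by norm_num
  constructor
  · intro hd u
    obtain ⟨f, hf, hdist⟩ := hd.exists_dist_lt (lp.single 2 u (1:ℂ)) one_pos
    -- f u ≠ 0
    have hfu : f u ≠ 0 := by
      intro h0
      set g : lp (fun _ : V => ℂ) 2 := lp.single 2 u (1:ℂ) - f with hg
      have h1 : ‖g u‖ ≤ ‖g‖ :=
        lp.norm_apply_le_norm (show (2:ℝ≥0∞) ≠ 0 by norm_num) g u
      have h2 : g u = 1 - f u := by
        rw [hg, lp.coeFn_sub, Pi.sub_apply, lp.single_apply_self]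
      rw [h2, h0, sub_zero] at h1
      have : ‖g‖ < 1 := by rw [hg, ← dist_eq_norm]; exact hdist
      simp at h1; linarith
    have hf2 : Memℓp ((f u)⁻¹ • T.Lam lam ⇑f) 2 := Memℓp.const_smul hf ((f u)⁻¹)
    have hsum : Summable fun v => ‖((f u)⁻¹ • T.Lam lam ⇑f) v‖ ^ (2:ℝ≥0∞).toReal :=
      (memℓp_gen_iff htp).mp hf2
    refine (memℓp_gen_iff htp).mpr (hsum.of_nonneg_of_le
      (fun v => Real.rpow_nonneg (norm_nonneg _) _) (fun v => ?_))
    have hle : ‖T.Lam lam (⇑(lp.single 2 u (1:ℂ))) v‖ ≤ ‖((f u)⁻¹ • T.Lam lam ⇑f) v‖ := by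
      rw [T.Lam_single]
      by_cases h : T.edge u v
      · rw [if_pos h]
        have hv : T.HasParent v := ⟨u, h⟩
        have : ((f u)⁻¹ • T.Lam lam ⇑f) v = lam v := by
          simp only [Pi.smul_apply, smul_eq_mul, DirectedTree.Lam, if_pos hv, T.par_eq h]
          field_simp
        rw [this]
      · rw [if_neg h]; simp; positivity
    exact Real.rpow_le_rpow (norm_nonneg _) hle htp.le
  · intro hu
    intro x
    have hs : HasSum (fun i : V => lp.single 2 i (x i)) x := lp.hasSum_single (by norm_num) x
    refine mem_closure_of_tendsto hs (Filter.Eventually.of_forall (fun s => ?_))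
    induction s using Finset.induction_on with
    | empty =>
        have h0 : (0 : lp (fun _ : V => ℂ) 2) ∈ T.domain lam := by
          simpa using T.domain_smul lam (0:ℂ) (hu T.nonempty.some)
        simpa using h0
    | @insert a s hne ih =>
        rw [Finset.sum_insert hne]
        refine T.domain_add lam ?_ ih
        have : (lp.single 2 a (x a) : lp (fun _ : V => ℂ) 2)
            = (x a) • lp.single 2 a (1:ℂ) := by
          rw [← lp.single_smul]; norm_num
        rw [this]
        exact T.domain_smul lam _ (hu a)
end
end

section
/- Let S_λ be a weighted shift on a directed tree T with weights λ = {λ_v}_{v∈V°} ⊆ ℂ. If D(S_λ) is dense in ℓ²(V) and λ_v ≠ 0 for all v ∈ V°, then V is at most countable. -/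
open scoped ENNReal NNReal Classical

noncomputable section

private def reachSet {V : Type} (R : V → V → Prop) (a : V) : ℕ → Set V
  | 0 => {a}
  | n + 1 => reachSet R a n ∪ ⋃ u ∈ reachSet R a n, {v | R u v}

private lemma countable_reflTransGen {V : Type} (R : V → V → Prop) (a : V)
    (hR : ∀ u, {v | R u v}.Countable) :
    {v | Relation.ReflTransGen R a v}.Countable := by
  have hScount : ∀ n, (reachSet R a n).Countable := by
    intro n; induction n with
    | zero => exact Set.countable_singleton a
    | succ n ih => exact ih.union (ih.biUnion fun u _ => hR u)
  have hsub : {v | Relation.ReflTransGen R a v} ⊆ ⋃ n, reachSet R a n := by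
    intro v hv
    induction hv with
    | refl => exact Set.mem_iUnion.2 ⟨0, rfl⟩
    | tail hab hbc ih =>
      obtain ⟨n, hn⟩ := Set.mem_iUnion.1 ih
      exact Set.mem_iUnion.2 ⟨n + 1, Set.mem_union_right _ (Set.mem_biUnion hn hbc)⟩
  exact (Set.countable_iUnion hScount).mono hsub

/-- Proposition 2.1(iv): if `D(S_λ)` is dense and all weights are nonzero,
then `V` is at most countable. -/
theorem stmt3 {V : Type} (T : DirectedTree V) (lam : V → ℂ)
    (hdense : Dense (T.domain lam)) (hnz : ∀ v ∈ T.Vcirc, lam v ≠ 0) :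
    Countable V := by
  classical
  -- Step 1: every vertex has countably many children
  have hchi : ∀ u : V, {v | T.edge u v}.Countable := by
    intro u
    set e : lp (fun _ : V => ℂ) 2 := lp.single 2 u (1 : ℂ) with he
    obtain ⟨f, hf, hdist⟩ := hdense.exists_dist_lt e one_pos
    -- f u ≠ 0
    have hfu : f u ≠ 0 := by
      intro h0
      have h1 : ‖(⇑(e - f)) u‖ ≤ ‖e - f‖ :=
        lp.norm_apply_le_norm two_ne_zero _ u
      have h2 : (⇑(e - f)) u = 1 := by
        rw [lp.coeFn_sub]
        simp [he, lp.single_apply, h0]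
      rw [h2] at h1
      have hd : dist e f = ‖e - f‖ := dist_eq_norm _ _
      rw [hd] at hdist
      simp at h1
      linarith
    have hpar : ∀ v, T.edge u v → T.par v = u := by
      intro v hv
      have h : T.HasParent v := ⟨u, hv⟩
      rw [DirectedTree.par, dif_pos h]
      exact T.parent_unique _ _ _ h.choose_spec hv
    have hsum : Summable fun v : V => ‖T.Lam lam (⇑f) v‖ ^ (2 : ℝ) := by
      have := hf.summable (p := 2) (by norm_num)
      simpa using this
    have hsub := hsum.subtype {v | T.edge u v}
    have hsupp := hsub.countable_support
    have hne : ∀ w : {v | T.edge u v},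
        ((fun v : V => ‖T.Lam lam (⇑f) v‖ ^ (2 : ℝ)) ∘
          (Subtype.val : {v | T.edge u v} → V)) w ≠ 0 := by
      intro w
      have hv : T.edge u (w : V) := w.2
      have hP : T.HasParent (w : V) := ⟨u, hv⟩
      have hLam : T.Lam lam (⇑f) (w : V) = lam (w : V) * f u := by
        rw [DirectedTree.Lam]
        simp only [if_pos hP, hpar _ hv]
      simp only [Function.comp_apply, hLam]
      have hlv : lam (w : V) ≠ 0 := hnz _ hP
      have hmul : lam (w : V) * f u ≠ 0 := mul_ne_zero hlv hfu
      have hnorm : ‖lam (w : V) * f u‖ ≠ 0 := norm_ne_zero_iff.2 hmul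
      have hpos : (0 : ℝ) < ‖lam (w : V) * f u‖ :=
        lt_of_le_of_ne (norm_nonneg _) (Ne.symm hnorm)
      exact ne_of_gt (Real.rpow_pos_of_pos hpos 2)
    have hall : Function.support ((fun v : V => ‖T.Lam lam (⇑f) v‖ ^ (2 : ℝ)) ∘
        (Subtype.val : {v | T.edge u v} → V)) = Set.univ :=
      Set.eq_univ_of_forall fun w => hne w
    replace hsupp := hsupp.mono (fun w (_ : w ∈ Set.univ) => hne w)
    exact Set.countable_coe_iff.1 (Set.countable_univ_iff.1 hsupp)
  -- Step 2: countable neighborhoods in the underlying graph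
  have hadj : ∀ u : V, {v | (SimpleGraph.fromRel T.edge).Adj u v}.Countable := by
    intro u
    have hpar : {v | T.edge v u}.Countable := by
      apply Set.Subsingleton.countable
      intro a ha b hb
      exact T.parent_unique a b u ha hb
    refine ((hchi u).union hpar).mono ?_
    intro v hv
    rcases hv with ⟨-, h | h⟩
    · exact Or.inl h
    · exact Or.inr h
  -- Step 3: connectivity gives countability
  have hconn := T.isTree.isConnected
  obtain ⟨v₀⟩ := T.nonempty
  have huniv : (Set.univ : Set V) ⊆ {v | Relation.ReflTransGen (SimpleGraph.fromRel T.edge).Adj v₀ v} := by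
    intro v _
    exact (SimpleGraph.reachable_iff_reflTransGen v₀ v).1 (hconn.preconnected v₀ v)
  have hcount : {v | Relation.ReflTransGen (SimpleGraph.fromRel T.edge).Adj v₀ v}.Countable :=
    countable_reflTransGen _ v₀ hadj
  have : (Set.univ : Set V).Countable := hcount.mono huniv
  exact Set.countable_univ_iff.1 this
end
end

section
/- Let S_λ be a weighted shift on a directed tree T with weights λ = {λ_v}_{v∈V°} ⊆ ℂ, and for u ∈ V set ζ_u = (Σ_{v∈Chi(u)} |λ_v|²)^{1/2} ∈ [0, ∞]. Then a complex function f on V belongs to D(S_λ²) if and only if Σ_{u∈V} (1 + ζ_u² + Σ_{v∈Chi(u)} ζ_v² |λ_v|²) |f(u)|² < ∞, with the convention that 0·∞ = 0. -/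
open scoped ENNReal NNReal Classical

noncomputable section

namespace DirectedTree

variable {V : Type} (T : DirectedTree V)

lemma edge_par' {v : V} (h : T.HasParent v) : T.edge (T.par v) v := by
  rw [par, dif_pos h]; exact h.choose_spec

lemma par_eq' {u v : V} (h : T.edge u v) : T.par v = u :=
  T.parent_unique _ _ _ (T.edge_par' ⟨u, h⟩) h

def sigmaEquiv' : (Σ u : V, T.chi u) ≃ T.Vcirc where
  toFun p := ⟨(p.2 : V), ⟨p.1, p.2.2⟩⟩
  invFun v := ⟨T.par (v : V), ⟨(v : V), T.edge_par' v.2⟩⟩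
  left_inv p := by
    obtain ⟨u, v, hv⟩ := p
    have h := T.par_eq' hv
    subst h
    rfl
  right_inv v := rfl

lemma tsum_chi_eq' (g : V → ℝ≥0∞) :
    ∑' u : V, ∑' v : T.chi u, g (v : V) = ∑' v : T.Vcirc, g (v : V) := by
  rw [← ENNReal.tsum_sigma (fun u (v : T.chi u) => g (v : V))]
  exact (T.sigmaEquiv'.tsum_eq fun v : T.Vcirc => g (v : V))

lemma memℓp_iff' {W : Type} (g : W → ℂ) : Memℓp g 2 ↔ ∑' v, (‖g v‖₊ : ℝ≥0∞) ^ 2 < ⊤ := by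
  rw [memℓp_gen_iff (by norm_num : 0 < (2 : ℝ≥0∞).toReal), lt_top_iff_ne_top]
  have h1 : ∀ v, ((‖g v‖₊ : ℝ≥0∞)) ^ 2 = ((‖g v‖₊ ^ 2 : ℝ≥0) : ℝ≥0∞) := by
    intro v; push_cast; ring
  have h2 : ∀ v, ‖g v‖ ^ (2 : ℝ≥0∞).toReal = ((‖g v‖₊ ^ 2 : ℝ≥0) : ℝ) := by
    intro v
    rw [show (2 : ℝ≥0∞).toReal = ((2 : ℕ) : ℝ) by norm_num, Real.rpow_natCast]
    push_cast; ring
  simp_rw [h1, h2]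
  rw [ENNReal.tsum_coe_ne_top_iff_summable, NNReal.summable_coe]

lemma zeta_sq' (lam : V → ℂ) (u : V) :
    T.zeta lam u ^ 2 = ∑' v : T.chi u, (‖lam (v : V)‖₊ : ℝ≥0∞) ^ 2 := by
  rw [zeta, ← ENNReal.rpow_natCast _ 2, ← ENNReal.rpow_mul]
  norm_num

lemma lam_nnnorm_sq' (lam : V → ℂ) (f : V → ℂ) (v : V) :
    (‖T.Lam lam f v‖₊ : ℝ≥0∞) ^ 2 =
      T.Vcirc.indicator (fun v => (‖lam v‖₊ : ℝ≥0∞) ^ 2 * (‖f (T.par v)‖₊ : ℝ≥0∞) ^ 2) v := by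
  rw [Lam]
  by_cases h : T.HasParent v
  · rw [if_pos h, Set.indicator_of_mem (show v ∈ T.Vcirc from h)]
    push_cast [nnnorm_mul]
    ring
  · rw [if_neg h, Set.indicator_of_notMem (show v ∉ T.Vcirc from h)]
    simp

lemma tsum_lam_sq' (lam : V → ℂ) (f : V → ℂ) :
    ∑' v, (‖T.Lam lam f v‖₊ : ℝ≥0∞) ^ 2 =
      ∑' u, T.zeta lam u ^ 2 * (‖f u‖₊ : ℝ≥0∞) ^ 2 := by
  simp_rw [T.lam_nnnorm_sq' lam f]
  rw [← tsum_subtype,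
    ← T.tsum_chi_eq' (fun v => (‖lam v‖₊ : ℝ≥0∞) ^ 2 * (‖f (T.par v)‖₊ : ℝ≥0∞) ^ 2)]
  refine tsum_congr fun u => ?_
  have h : ∀ v : T.chi u, (‖f (T.par (v : V))‖₊ : ℝ≥0∞) = (‖f u‖₊ : ℝ≥0∞) :=
    fun v => by rw [T.par_eq' v.2]
  simp_rw [h]
  rw [ENNReal.tsum_mul_right, zeta_sq']

lemma tsum_zeta_lam_sq' (lam : V → ℂ) (f : V → ℂ) :
    ∑' u, T.zeta lam u ^ 2 * (‖T.Lam lam f u‖₊ : ℝ≥0∞) ^ 2 =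
      ∑' u, (∑' v : T.chi u, T.zeta lam (v : V) ^ 2 * (‖lam (v : V)‖₊ : ℝ≥0∞) ^ 2) *
        (‖f u‖₊ : ℝ≥0∞) ^ 2 := by
  have key : ∀ u, T.zeta lam u ^ 2 * (‖T.Lam lam f u‖₊ : ℝ≥0∞) ^ 2 =
      T.Vcirc.indicator
        (fun u => T.zeta lam u ^ 2 * (‖lam u‖₊ : ℝ≥0∞) ^ 2 * (‖f (T.par u)‖₊ : ℝ≥0∞) ^ 2) u := by
    intro u
    rw [T.lam_nnnorm_sq']
    by_cases h : u ∈ T.Vcirc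
    · rw [Set.indicator_of_mem (show u ∈ T.Vcirc from h),
        Set.indicator_of_mem (show u ∈ T.Vcirc from h)]
      ring
    · rw [Set.indicator_of_notMem (show u ∉ T.Vcirc from h),
        Set.indicator_of_notMem (show u ∉ T.Vcirc from h), mul_zero]
  simp_rw [key]
  rw [← tsum_subtype,
    ← T.tsum_chi_eq' (fun v => T.zeta lam v ^ 2 * (‖lam v‖₊ : ℝ≥0∞) ^ 2 *
      (‖f (T.par v)‖₊ : ℝ≥0∞) ^ 2)]
  refine tsum_congr fun u => ?_
  have h : ∀ v : T.chi u, (‖f (T.par (v : V))‖₊ : ℝ≥0∞) = (‖f u‖₊ : ℝ≥0∞) :=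
    fun v => by rw [T.par_eq' v.2]
  simp_rw [h]
  rw [ENNReal.tsum_mul_right]

end DirectedTree


/-- (†): a complex function `f` on `V` belongs to `D(S_λ²)` iff
`Σ_{u∈V} (1 + ζ_u² + Σ_{v∈Chi(u)} ζ_v² |λ_v|²) |f(u)|² < ∞`. -/
theorem stmt4 {V : Type} (T : DirectedTree V) (lam : V → ℂ) (f : V → ℂ) :
    (Memℓp f 2 ∧ Memℓp (T.Lam lam f) 2 ∧ Memℓp (T.Lam lam (T.Lam lam f)) 2) ↔
      ∑' u : V, (1 + T.zeta lam u ^ 2 +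
          ∑' v : T.chi u, T.zeta lam (v:V) ^ 2 * (‖lam (v:V)‖₊ : ℝ≥0∞) ^ 2) *
        (‖f u‖₊ : ℝ≥0∞) ^ 2 < ⊤ := by
  simp_rw [DirectedTree.memℓp_iff', add_mul, one_mul, ENNReal.tsum_add]
  rw [T.tsum_lam_sq' lam f, T.tsum_lam_sq' lam (T.Lam lam f), T.tsum_zeta_lam_sq']
  rw [ENNReal.add_lt_top, ENNReal.add_lt_top]
  tauto
end
end

section
/- Let T be a directed tree and let λ = {λ_v}_{v∈V°} be a family of nonzero complex numbers such that the weighted shift S_λ has dense domain in ℓ²(V) and D(S_λ²) = {0}. Then S_λ is injective. -/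
open scoped ENNReal NNReal Classical

noncomputable section

/-- Theorem 3.1, "moreover": if the weights are nonzero, `S_λ` is densely defined and
`D(S_λ²) = {0}`, then `S_λ` is injective. -/
theorem stmt9 {V : Type} (T : DirectedTree V) (lam : V → ℂ)
    (hnz : ∀ v ∈ T.Vcirc, lam v ≠ 0) (hdense : Dense (T.domain lam))
    (hsq : T.squareDomain lam = ({0} : Set (lp (fun _ : V => ℂ) 2))) :
    Set.InjOn (T.shift lam) (T.domain lam) := by
  intro f hf g hg heq
  -- from the equality of shifts, get equality of Lam's
  have hLam : T.Lam lam ⇑f = T.Lam lam ⇑g := by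
    have : ⇑(T.shift lam f) = ⇑(T.shift lam g) := by rw [heq]
    simpa [DirectedTree.shift, dif_pos hf, dif_pos hg] using this
  set h : lp (fun _ : V => ℂ) 2 := f - g with hh
  have hcoe : ⇑h = ⇑f - ⇑g := by rw [hh]; exact lp.coeFn_sub f g
  have hLamh : T.Lam lam ⇑h = 0 := by
    funext v
    simp only [DirectedTree.Lam]
    split_ifs with hv
    · have h1 : lam v * f (T.par v) = lam v * g (T.par v) := by
        have := congrFun hLam v
        simpa [DirectedTree.Lam, hv] using this
      have h2 : f (T.par v) = g (T.par v) := mul_left_cancel₀ (hnz v hv) h1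
      simp [hcoe, h2]
    · rfl
  have hhd : h ∈ T.domain lam := by
    show Memℓp (T.Lam lam ⇑h) 2
    rw [hLamh]; exact zero_memℓp
  have hsh : ⇑(T.shift lam h) = 0 := by
    simp [DirectedTree.shift, dif_pos hhd, hLamh]
  have hhsq : h ∈ T.squareDomain lam := by
    refine ⟨hhd, ?_⟩
    show Memℓp (T.Lam lam ⇑(T.shift lam h)) 2
    have : T.Lam lam ⇑(T.shift lam h) = 0 := by
      funext v
      simp [DirectedTree.Lam, hsh]
    rw [this]; exact zero_memℓp
  have : h = 0 := by
    have := hsq ▸ hhsq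
    simpa using this
  have := sub_eq_zero.mp (hh ▸ this)
  exact this
end
end

section
/- Let T be a directed tree such that the set Chi(u) of children of u is countably infinite for every u ∈ V. Then for each θ ∈ (0, ∞) and each u ∈ V there exists a family {λ_v}_{v∈Des(u)} of positive real numbers such that λ_u² = θ and (Σ_{w∈Chi(v)} λ_w²) · λ_v² = 1 for every v ∈ Des(u). -/
open scoped ENNReal NNReal Classical

noncomputable section

namespace DirectedTreeAux

open DirectedTree

variable {V : Type} (T : DirectedTree V)

theorem par_spec {v : V} (h : T.HasParent v) : T.edge (T.par v) v := by
  rw [DirectedTree.par, dif_pos h]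
  exact h.choose_spec

theorem par_eq {x v : V} (h : T.edge x v) : T.par v = x :=
  T.parent_unique _ _ _ (par_spec T ⟨x, h⟩) h

/-- No directed "almost-cycles": one cannot return to an ancestor by an edge. -/
theorem no_cycle {a b : V} (hab : Relation.ReflTransGen T.edge a b) (hba : T.edge b a) :
    False := by
  have hne : b ≠ a := by
    rintro rfl
    exact T.antisymm b b hba hba
  have hadj : (SimpleGraph.fromRel T.edge).Adj b a := by
    rw [SimpleGraph.fromRel_adj]
    exact ⟨hne, Or.inl hba⟩
  have hbridge := (SimpleGraph.isAcyclic_iff_forall_adj_isBridge.mp T.isTree.IsAcyclic) hadj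
  rw [SimpleGraph.isBridge_iff] at hbridge
  refine hbridge ?_
  refine SimpleGraph.Reachable.symm ?_
  clear hbridge hadj
  have reach : ∀ y, Relation.ReflTransGen T.edge a y →
      (SimpleGraph.fromRel T.edge \ SimpleGraph.fromEdgeSet {s(b, a)}).Reachable a y := by
    intro z hz
    induction hz with
    | refl => exact SimpleGraph.Reachable.refl _
    | @tail x y hax hxy ih =>
      by_cases hy : y = a
      · subst hy; exact SimpleGraph.Reachable.refl _
      · refine ih.trans (SimpleGraph.Adj.reachable ?_)
        have hxyne : x ≠ y := by
          rintro rfl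
          exact T.antisymm x x hxy hxy
        rw [SimpleGraph.sdiff_adj]
        constructor
        · rw [SimpleGraph.fromRel_adj]
          exact ⟨hxyne, Or.inl hxy⟩
        · rw [SimpleGraph.fromEdgeSet_adj]
          rintro ⟨hmem, -⟩
          rw [Set.mem_singleton_iff, Sym2.eq_iff] at hmem
          rcases hmem with ⟨rfl, rfl⟩ | ⟨rfl, rfl⟩
          · exact hy rfl
          · exact T.antisymm _ _ hba hxy
  exact reach b hab

theorem desc_iterate {u v : V} (h : v ∈ T.desc u) : ∃ n, T.par^[n] v = u := by
  induction h with
  | refl => exact ⟨0, rfl⟩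
  | @tail x y hux hxy ih =>
    obtain ⟨n, hn⟩ := ih
    refine ⟨n + 1, ?_⟩
    rw [Function.iterate_succ_apply, par_eq T hxy, hn]

/-- Auxiliary recursively-defined weight function: the value at depth `n`. -/
noncomputable def auxA (par : V → V) (idx : V → ℕ) (θ : ℝ) : ℕ → V → ℝ
  | 0, _ => Real.sqrt θ
  | n + 1, v => Real.sqrt ((1 / 2 : ℝ) ^ (idx v + 1)) / auxA par idx θ n (par v)

theorem auxA_pos (par : V → V) (idx : V → ℕ) {θ : ℝ} (hθ : 0 < θ) :
    ∀ n v, 0 < auxA par idx θ n v := by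
  intro n
  induction n with
  | zero => intro v; exact Real.sqrt_pos.mpr hθ
  | succ n ih =>
    intro v
    exact div_pos (Real.sqrt_pos.mpr (by positivity)) (ih (par v))

end DirectedTreeAux

/-- (‡): if every vertex has countably infinitely many children, then for each
`θ ∈ (0,∞)` and `u ∈ V` there is a family of positive reals `{λ_v}_{v∈Des(u)}`
with `λ_u² = θ` and `(Σ_{w∈Chi(v)} λ_w²) λ_v² = 1` for every `v ∈ Des(u)`. -/
theorem stmt10 {V : Type} (T : DirectedTree V)
    (h : ∀ u : V, (T.chi u).Countable ∧ (T.chi u).Infinite)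
    (θ : ℝ) (hθ : 0 < θ) (u : V) :
    ∃ lam : V → ℝ, (∀ v ∈ T.desc u, 0 < lam v) ∧ lam u ^ 2 = θ ∧
      ∀ v ∈ T.desc u, Summable (fun w : T.chi v => lam (w:V) ^ 2) ∧
        (∑' w : T.chi v, lam (w:V) ^ 2) * lam v ^ 2 = 1 := by
  classical
  open DirectedTreeAux in
  -- choose enumerations of the children sets
  have hE : ∀ p : V, Nonempty (T.chi p ≃ ℕ) := by
    intro p
    have h1 : Countable (T.chi p) := (h p).1.to_subtype
    have h2 : Infinite (T.chi p) := (h p).2.to_subtype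
    obtain ⟨d⟩ := nonempty_denumerable (T.chi p)
    exact ⟨d.eqv⟩
  set E : ∀ p : V, T.chi p ≃ ℕ := fun p => (hE p).some with hEdef
  set idx : V → ℕ := fun v =>
    if hv : T.HasParent v then E (T.par v) ⟨v, par_spec T hv⟩ else 0 with hidx
  have idx_eq : ∀ x y (hxy : T.edge x y), idx y = E x ⟨y, hxy⟩ := by
    intro x y hxy
    have hp : T.HasParent y := ⟨x, hxy⟩
    have hx : T.par y = x := par_eq T hxy
    rw [hidx]
    simp only [dif_pos hp]
    subst hx
    rfl
  set d : V → ℕ := fun v =>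
    if hv : ∃ n, T.par^[n] v = u then Nat.find hv else 0 with hd
  set lam : V → ℝ := fun v => auxA T.par idx θ (d v) v with hlam
  have lampos : ∀ v, 0 < lam v := fun v => auxA_pos T.par idx hθ _ v
  -- depth of a child of a descendant
  have d_spec : ∀ v (hv : v ∈ T.desc u), T.par^[d v] v = u := by
    intro v hv
    have hex := desc_iterate T hv
    rw [hd]
    simp only [dif_pos hex]
    exact Nat.find_spec hex
  have d_child : ∀ v (hv : v ∈ T.desc u) w (hvw : T.edge v w), d w = d v + 1 := by
    intro v hv w hvw
    have hexv := desc_iterate T hv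
    have hpw : T.par w = v := par_eq T hvw
    have hexw : ∃ n, T.par^[n] w = u :=
      ⟨d v + 1, by rw [Function.iterate_succ_apply, hpw]; exact d_spec v hv⟩
    have hdw : d w = Nat.find hexw := by rw [hd]; simp only [dif_pos hexw]
    have hdv : d v = Nat.find hexv := by rw [hd]; simp only [dif_pos hexv]
    rw [hdw]
    refine le_antisymm (Nat.find_le ?_) ?_
    · rw [Function.iterate_succ_apply, hpw]; exact d_spec v hv
    · by_contra hlt
      push_neg at hlt
      have hspec := Nat.find_spec hexw
      set m := Nat.find hexw with hm
      rcases Nat.eq_zero_or_eq_succ_pred m with h0 | hs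
      · rw [h0] at hspec
        simp only [Function.iterate_zero, id_eq] at hspec
        subst hspec
        exact no_cycle T hv hvw
      · rw [hs, Function.iterate_succ_apply, hpw] at hspec
        have : m - 1 < d v := by omega
        rw [hdv] at this
        exact Nat.find_min hexv this hspec
  -- the key recursion formula
  have key : ∀ v (hv : v ∈ T.desc u) (w : T.chi v),
      lam (w : V) ^ 2 = (1 / 2 : ℝ) ^ (E v w + 1) / lam v ^ 2 := by
    intro v hv w
    have hvw : T.edge v (w : V) := w.2
    have hdw := d_child v hv (w : V) hvw
    have hpw : T.par (w : V) = v := par_eq T hvw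
    have : lam (w : V) = Real.sqrt ((1 / 2 : ℝ) ^ (idx (w : V) + 1)) / lam v := by
      rw [hlam]
      simp only [hdw, auxA, hpw]
    rw [this, div_pow, Real.sq_sqrt (by positivity), idx_eq v (w : V) hvw]
  refine ⟨lam, fun v _ => lampos v, ?_, ?_⟩
  · have hdu : d u = 0 := by
      rw [hd]
      have hex : ∃ n, T.par^[n] u = u := ⟨0, rfl⟩
      simp only [dif_pos hex]
      rw [Nat.find_eq_zero]
      rfl
    rw [hlam]
    simp only [hdu, auxA]
    exact Real.sq_sqrt hθ.le
  · intro v hv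
    have hne : lam v ^ 2 ≠ 0 := pow_ne_zero 2 (lampos v).ne'
    have hfun : (fun w : T.chi v => lam (w : V) ^ 2) =
        (fun n : ℕ => (1 / 2 : ℝ) ^ (n + 1) / lam v ^ 2) ∘ (E v) := by
      funext w
      exact key v hv w
    have hg : Summable (fun n : ℕ => (1 / 2 : ℝ) ^ (n + 1) / lam v ^ 2) := by
      have := (summable_geometric_of_lt_one (by norm_num : (0:ℝ) ≤ 1/2)
        (by norm_num)).mul_right ((1 / 2) / lam v ^ 2)
      refine this.congr fun n => ?_
      ring
    have hsummable : Summable (fun w : T.chi v => lam (w : V) ^ 2) := by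
      rw [hfun]
      exact ((E v).summable_iff (f := fun n : ℕ => (1 / 2 : ℝ) ^ (n + 1) / lam v ^ 2)).mpr hg
    refine ⟨hsummable, ?_⟩
    have htsum : ∑' w : T.chi v, lam (w : V) ^ 2
        = ∑' n : ℕ, (1 / 2 : ℝ) ^ (n + 1) / lam v ^ 2 := by
      conv_lhs => rw [hfun]
      exact (E v).tsum_eq (fun n : ℕ => (1 / 2 : ℝ) ^ (n + 1) / lam v ^ 2)
    rw [htsum]
    have : ∑' n : ℕ, (1 / 2 : ℝ) ^ (n + 1) / lam v ^ 2
        = (∑' n : ℕ, (1 / 2 : ℝ) ^ n) * ((1 / 2) / lam v ^ 2) := by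
      rw [← tsum_mul_right]
      congr 1
      funext n
      ring
    rw [this, tsum_geometric_of_lt_one (by norm_num) (by norm_num)]
    field_simp
    norm_num
    exact (lampos v).ne'
end
end

section
/- Let T be a directed tree such that the set Chi(u) of children of u is countably infinite for every u ∈ V. Then there exists a family λ = {λ_v}_{v∈V°} of nonzero complex numbers such that the weighted shift S_λ is injective and hyponormal and D(S_λ²) = {0}. -/
open scoped ENNReal NNReal Classical

noncomputable section

namespace Stmt14

open DirectedTree SimpleGraph

variable {V : Type} (T : DirectedTree V)

lemma edge_par {v : V} (h : T.HasParent v) : T.edge (T.par v) v := by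
  rw [DirectedTree.par, dif_pos h]; exact h.choose_spec

lemma par_eq {u v : V} (h : T.edge u v) : T.par v = u :=
  T.parent_unique _ _ _ (edge_par T ⟨u, h⟩) h

lemma edge_ne {u v : V} (h : T.edge u v) : u ≠ v := by
  rintro rfl; exact T.antisymm _ _ h h

lemma adj_of_edge {u v : V} (h : T.edge u v) : (SimpleGraph.fromRel T.edge).Adj u v := by
  rw [SimpleGraph.fromRel_adj]; exact ⟨edge_ne T h, Or.inl h⟩

variable (h : ∀ u : V, (T.chi u).Countable ∧ (T.chi u).Infinite)

/-- enumeration of the children of `u` -/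
noncomputable def enum (u : V) : ↥(T.chi u) ≃ ℕ :=
  haveI : Countable ↥(T.chi u) := (h u).1.to_subtype
  haveI : Infinite ↥(T.chi u) := (h u).2.to_subtype
  (Classical.choice (nonempty_denumerable _)).eqv

/-- the index of a vertex among the children of its parent -/
noncomputable def idx (v : V) : ℕ :=
  if hv : T.HasParent v then enum T h (T.par v) ⟨v, edge_par T hv⟩ else 0

lemma idx_eq {u : V} (v : ↥(T.chi u)) : idx T h (v : V) = enum T h u v := by
  obtain ⟨v, hv⟩ := v
  have e : T.par v = u := par_eq T hv
  subst e
  rw [idx, dif_pos ⟨_, hv⟩]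


/-- antisymmetric edge labelling -/
noncomputable def phi (a b : V) : ℤ :=
  (if T.edge a b then (idx T h b : ℤ) + 1 else 0) -
    (if T.edge b a then (idx T h a : ℤ) + 1 else 0)

/-- sum of the labelling along a walk -/
noncomputable def wsum {a b : V} (p : (fromRel T.edge).Walk a b) : ℤ :=
  (p.darts.map (fun d => phi T h d.fst d.snd)).sum

lemma wsum_append {a b c : V} (p : (fromRel T.edge).Walk a b)
    (q : (fromRel T.edge).Walk b c) :
    wsum T h (p.append q) = wsum T h p + wsum T h q := by
  simp [wsum, SimpleGraph.Walk.darts_append]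

lemma wsum_concat {a b c : V} (p : (fromRel T.edge).Walk a b)
    (hadj : (fromRel T.edge).Adj b c) :
    wsum T h (p.concat hadj) = wsum T h p + phi T h b c := by
  simp [wsum, SimpleGraph.Walk.darts_concat]

/-- the potential -/
noncomputable def pot (u : V) : ℤ :=
  wsum T h (T.isTree.existsUnique_path T.nonempty.some u).choose

lemma pot_spec {u : V} (p : (fromRel T.edge).Walk T.nonempty.some u) (hp : p.IsPath) :
    pot T h u = wsum T h p := by
  rw [pot, (T.isTree.existsUnique_path T.nonempty.some u).choose_spec.2 p hp]

lemma pot_rec {v : V} (hv : T.HasParent v) :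
    pot T h v = pot T h (T.par v) + ((idx T h v : ℤ) + 1) := by
  set u := T.par v with hu
  have hedge : T.edge u v := edge_par T hv
  have hadj : (fromRel T.edge).Adj u v := adj_of_edge T hedge
  have hphi : phi T h u v = (idx T h v : ℤ) + 1 := by
    rw [phi, if_pos hedge, if_neg (T.antisymm _ _ hedge)]; ring
  obtain ⟨P, hP, -⟩ := T.isTree.existsUnique_path T.nonempty.some u
  by_cases hvP : v ∈ P.support
  · -- P passes through v; the part after v must be the single edge v-u
    have h1 : (P.takeUntil v hvP).IsPath := hP.takeUntil hvP
    have h2 : (P.dropUntil v hvP).IsPath := hP.dropUntil hvP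
    have hE : ((SimpleGraph.Walk.cons hadj.symm SimpleGraph.Walk.nil) :
        (fromRel T.edge).Walk v u).IsPath := by
      simp [SimpleGraph.Walk.isPath_def, hadj.ne']
    have hdu : P.dropUntil v hvP = SimpleGraph.Walk.cons hadj.symm SimpleGraph.Walk.nil :=
      (T.isTree.existsUnique_path v u).unique h2 hE
    have hPspec := P.take_spec hvP
    have e1 : pot T h u = wsum T h P := pot_spec T h P hP
    have e2 : pot T h v = wsum T h (P.takeUntil v hvP) := pot_spec T h _ h1
    have e3 : wsum T h P = wsum T h (P.takeUntil v hvP) + phi T h v u := by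
      conv_lhs => rw [← hPspec]
      rw [wsum_append, hdu]
      simp [wsum]
    have hphi' : phi T h v u = -((idx T h v : ℤ) + 1) := by
      rw [phi, if_pos hedge, if_neg (T.antisymm _ _ hedge)]; ring
    rw [e1, e3, hphi', e2]; ring
  · -- extend P by the edge u-v
    have hQ : (P.concat hadj).IsPath := by
      rw [SimpleGraph.Walk.isPath_def, SimpleGraph.Walk.support_concat]
      rw [SimpleGraph.Walk.isPath_def] at hP
      simp [List.nodup_append, hP, hvP]
      exact fun a ha hav => hvP (hav ▸ ha)
    have e1 : pot T h v = wsum T h (P.concat hadj) := pot_spec T h _ hQ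
    rw [e1, wsum_concat, hphi, pot_spec T h P hP]

lemma geom_half : ∑' n : ℕ, ((2 : ℝ≥0∞)⁻¹) ^ (n + 1) = 1 := by
  have e : ∀ n : ℕ, ((2 : ℝ≥0∞)⁻¹) ^ (n + 1) = 2⁻¹ * 2⁻¹ ^ n := fun n => by
    rw [pow_succ, mul_comm]
  rw [tsum_congr e, ENNReal.tsum_mul_left, ENNReal.tsum_geometric,
    ENNReal.one_sub_inv_two, inv_inv, ENNReal.inv_mul_cancel two_ne_zero ENNReal.ofNat_ne_top]

lemma geom_quarter : ∑' n : ℕ, (((2 : ℝ≥0∞)⁻¹) ^ (n + 1)) ^ 2 ≤ 1 := by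
  calc ∑' n : ℕ, (((2 : ℝ≥0∞)⁻¹) ^ (n + 1)) ^ 2 ≤ ∑' n : ℕ, ((2 : ℝ≥0∞)⁻¹) ^ (n + 1) := by
        refine ENNReal.tsum_le_tsum fun n => ?_
        rw [_root_.sq]
        conv_rhs => rw [← one_mul (((2 : ℝ≥0∞)⁻¹) ^ (n + 1))]
        exact mul_le_mul' (pow_le_one' (ENNReal.inv_le_one.2 one_le_two) _) le_rfl
    _ = 1 := geom_half

/-- `sqz u` is the square of the quantity `ζ_u`. -/
noncomputable def sqz (u : V) : ℝ≥0 := 2 ^ (pot T h u)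

lemma sqz_ne (u : V) : sqz T h u ≠ 0 := zpow_ne_zero _ two_ne_zero

lemma sqz_rec {v : V} (hv : T.HasParent v) :
    sqz T h v = sqz T h (T.par v) * 2 ^ (idx T h v + 1) := by
  rw [sqz, sqz, pot_rec T h hv, zpow_add₀ two_ne_zero]
  norm_cast

/-- the weights -/
noncomputable def wt (v : V) : ℝ≥0 :=
  NNReal.sqrt (sqz T h (T.par v) / 2 ^ (idx T h v + 1))

lemma wt_sq (v : V) : wt T h v ^ 2 = sqz T h (T.par v) / 2 ^ (idx T h v + 1) :=
  NNReal.sq_sqrt _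

lemma wt_ne (v : V) : wt T h v ≠ 0 := by
  rw [wt, Ne, NNReal.sqrt_eq_zero]
  exact div_ne_zero (sqz_ne T h _) (pow_ne_zero _ two_ne_zero)

noncomputable def lamF (v : V) : ℂ := ((wt T h v : ℝ) : ℂ)

lemma nnnorm_lamF (v : V) : ‖lamF T h v‖₊ = wt T h v := by
  rw [lamF]
  simp

lemma lamF_ne (v : V) : lamF T h v ≠ 0 := by
  have := wt_ne T h v
  simp only [lamF, Ne, Complex.ofReal_eq_zero, NNReal.coe_eq_zero]
  exact this

lemma conj_lamF (v : V) : (starRingEnd ℂ) (lamF T h v) = lamF T h v := by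
  rw [lamF, Complex.conj_ofReal]


/-- the children partition the set of non-root vertices -/
noncomputable def sigmaEquiv : (Σ u : V, ↥(T.chi u)) ≃ ↥T.Vcirc where
  toFun p := ⟨(p.2 : V), ⟨p.1, p.2.2⟩⟩
  invFun x := ⟨T.par (x : V), ⟨(x : V), edge_par T x.2⟩⟩
  left_inv := by
    rintro ⟨u, v, hv⟩
    exact Sigma.subtype_ext (par_eq T hv) rfl
  right_inv := by rintro ⟨v, hv⟩; rfl

lemma fubini (Q G : V → ℝ≥0∞) :
    ∑' v : V, (if T.HasParent v then Q v * G (T.par v) else 0)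
      = ∑' u : V, G u * ∑' v : ↥(T.chi u), Q (v : V) := by
  have hsupp : Function.support
      (fun v : V => if T.HasParent v then Q v * G (T.par v) else 0) ⊆ T.Vcirc := by
    intro v hv
    by_contra hc
    exact hv (if_neg hc)
  rw [← tsum_subtype_eq_of_support_subset hsupp, ← Equiv.tsum_eq (sigmaEquiv T),
    ENNReal.tsum_sigma']
  refine tsum_congr fun u => ?_
  rw [← ENNReal.tsum_mul_left]
  refine tsum_congr fun v => ?_
  have hp : T.HasParent (v : V) := ⟨u, v.2⟩
  show (if T.HasParent (v : V) then Q v * G (T.par (v : V)) else 0) = G u * Q (v : V)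
  rw [if_pos hp, par_eq T v.2, mul_comm]

lemma wt_sq_chi {u : V} (v : ↥(T.chi u)) :
    wt T h (v : V) ^ 2 = sqz T h u / 2 ^ (enum T h u v + 1) := by
  rw [wt_sq, par_eq T v.2, idx_eq]

lemma sqz_chi {u : V} (v : ↥(T.chi u)) :
    sqz T h (v : V) = sqz T h u * 2 ^ (enum T h u v + 1) := by
  rw [sqz_rec T h ⟨u, v.2⟩, par_eq T v.2, idx_eq]

lemma coe_wt_sq_chi {u : V} (v : ↥(T.chi u)) :
    ((wt T h (v : V) : ℝ≥0∞)) ^ 2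
      = (sqz T h u : ℝ≥0∞) * (2 : ℝ≥0∞)⁻¹ ^ (enum T h u v + 1) := by
  rw [← ENNReal.coe_pow, wt_sq_chi T h, ENNReal.coe_div (pow_ne_zero _ two_ne_zero),
    div_eq_mul_inv, ← ENNReal.inv_pow]
  rw [ENNReal.coe_pow, ENNReal.coe_ofNat]

lemma chi_sum_wt (u : V) :
    ∑' v : ↥(T.chi u), ((wt T h (v : V) : ℝ≥0∞)) ^ 2 = (sqz T h u : ℝ≥0∞) := by
  rw [← Equiv.tsum_eq (enum T h u).symm]
  have e : ∀ n : ℕ, ((wt T h (((enum T h u).symm n : ↥(T.chi u)) : V) : ℝ≥0∞)) ^ 2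
      = (sqz T h u : ℝ≥0∞) * (2 : ℝ≥0∞)⁻¹ ^ (n + 1) := fun n => by
    rw [coe_wt_sq_chi T h, Equiv.apply_symm_apply]
  rw [tsum_congr e, ENNReal.tsum_mul_left, geom_half, mul_one]

lemma chi_sum_top (u : V) :
    ∑' v : ↥(T.chi u), ((wt T h (v : V) : ℝ≥0∞)) ^ 2 * (sqz T h (v : V) : ℝ≥0∞) = ⊤ := by
  haveI : Infinite ↥(T.chi u) := (h u).2.to_subtype
  have e : ∀ v : ↥(T.chi u), ((wt T h (v : V) : ℝ≥0∞)) ^ 2 * (sqz T h (v : V) : ℝ≥0∞)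
      = ((sqz T h u ^ 2 : ℝ≥0) : ℝ≥0∞) := fun v => by
    rw [← ENNReal.coe_pow, ← ENNReal.coe_mul, wt_sq_chi T h, sqz_chi T h]
    congr 1
    field_simp
  rw [tsum_congr e]
  exact ENNReal.tsum_const_eq_top_of_ne_zero (by
    simp only [Ne, ENNReal.coe_eq_zero]
    exact pow_ne_zero _ (sqz_ne T h u))

lemma chi_sum_hypo (u : V) :
    ∑' v : ↥(T.chi u), ((wt T h (v : V) : ℝ≥0∞)) ^ 2 / (sqz T h (v : V) : ℝ≥0∞) ≤ 1 := by
  have e : ∀ v : ↥(T.chi u), ((wt T h (v : V) : ℝ≥0∞)) ^ 2 / (sqz T h (v : V) : ℝ≥0∞)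
      = (((2 : ℝ≥0∞)⁻¹) ^ (enum T h u v + 1)) ^ 2 := fun v => by
    have hnn : wt T h (v : V) ^ 2 / sqz T h (v : V)
        = (((2 : ℝ≥0)⁻¹) ^ (enum T h u v + 1)) ^ 2 := by
      rw [wt_sq_chi T h, sqz_chi T h, div_div,
        show (2 : ℝ≥0) ^ (enum T h u v + 1) * (sqz T h u * 2 ^ (enum T h u v + 1))
          = sqz T h u * (2 ^ (enum T h u v + 1) * 2 ^ (enum T h u v + 1)) by ring,
        div_mul_cancel_left₀ (sqz_ne T h u)]
      rw [_root_.sq, mul_inv, inv_pow]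
    rw [← ENNReal.coe_pow, ← ENNReal.coe_div (by simp [sqz_ne T h]), hnn]
    push_cast [ENNReal.coe_inv (two_ne_zero (α := ℝ≥0))]
    rfl
  rw [tsum_congr e]
  calc ∑' v : ↥(T.chi u), (((2 : ℝ≥0∞)⁻¹) ^ (enum T h u v + 1)) ^ 2
      = ∑' n : ℕ, (((2 : ℝ≥0∞)⁻¹) ^ (n + 1)) ^ 2 := by
        rw [← Equiv.tsum_eq (enum T h u).symm]
        exact tsum_congr fun n => by rw [Equiv.apply_symm_apply]
    _ ≤ 1 := geom_quarter


section Helpers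

variable {α : Type}

lemma rpow_two_eq (x : ℝ≥0) : (x : ℝ) ^ (2 : ℝ≥0∞).toReal = ((x ^ 2 : ℝ≥0) : ℝ) := by
  have h2 : (2 : ℝ≥0∞).toReal = ((2 : ℕ) : ℝ) := by simp
  rw [h2, Real.rpow_natCast]
  push_cast
  ring

lemma memℓp_two_iff (f : α → ℂ) :
    Memℓp f 2 ↔ ∑' v, ((‖f v‖₊ : ℝ≥0∞)) ^ 2 ≠ ⊤ := by
  rw [memℓp_gen_iff (by norm_num : 0 < (2 : ℝ≥0∞).toReal)]
  have e : ∀ v, ‖f v‖ ^ (2 : ℝ≥0∞).toReal = ((‖f v‖₊ ^ 2 : ℝ≥0) : ℝ) := fun v => by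
    rw [← coe_nnnorm, rpow_two_eq]
  rw [summable_congr e, NNReal.summable_coe, ← ENNReal.tsum_coe_ne_top_iff_summable]
  have e2 : ∑' v, ((‖f v‖₊ ^ 2 : ℝ≥0) : ℝ≥0∞) = ∑' v, ((‖f v‖₊ : ℝ≥0∞)) ^ 2 :=
    tsum_congr fun v => by rw [ENNReal.coe_pow]
  rw [e2]

lemma tsum_sq_ne_top (F : lp (fun _ : α => ℂ) 2) :
    ∑' v, ((‖F v‖₊ : ℝ≥0∞)) ^ 2 ≠ ⊤ :=
  (memℓp_two_iff ⇑F).1 (lp.memℓp F)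

lemma norm_eq_tsum_sq (F : lp (fun _ : α => ℂ) 2) :
    ‖F‖ ^ 2 = ((∑' v, ((‖F v‖₊ : ℝ≥0∞)) ^ 2).toReal) := by
  have hp : 0 < (2 : ℝ≥0∞).toReal := by norm_num
  have hF := lp.norm_rpow_eq_tsum hp F
  have e : ∀ v, ‖F v‖ ^ (2 : ℝ≥0∞).toReal = ((‖F v‖₊ ^ 2 : ℝ≥0) : ℝ) := fun v => by
    rw [← coe_nnnorm, rpow_two_eq]
  rw [tsum_congr e] at hF
  have hsum : Summable fun v => (‖F v‖₊ ^ 2 : ℝ≥0) := by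
    rw [← ENNReal.tsum_coe_ne_top_iff_summable]
    have e2 : ∑' v, ((‖F v‖₊ ^ 2 : ℝ≥0) : ℝ≥0∞) = ∑' v, ((‖F v‖₊ : ℝ≥0∞)) ^ 2 :=
      tsum_congr fun v => by rw [ENNReal.coe_pow]
    rw [e2]
    exact tsum_sq_ne_top F
  have e3 : ∑' v, ((‖F v‖₊ : ℝ≥0∞)) ^ 2 = ((∑' v, (‖F v‖₊ ^ 2 : ℝ≥0) : ℝ≥0) : ℝ≥0∞) := by
    rw [ENNReal.coe_tsum hsum]
    exact tsum_congr fun v => by rw [ENNReal.coe_pow]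
  rw [e3, ENNReal.coe_toReal, NNReal.coe_tsum, ← hF]
  have h2 : (2 : ℝ≥0∞).toReal = ((2 : ℕ) : ℝ) := by simp
  rw [h2, Real.rpow_natCast]

lemma norm_le_of_tsum_le {F G : lp (fun _ : α => ℂ) 2}
    (hle : ∑' v, ((‖F v‖₊ : ℝ≥0∞)) ^ 2 ≤ ∑' v, ((‖G v‖₊ : ℝ≥0∞)) ^ 2) : ‖F‖ ≤ ‖G‖ := by
  have h1 : ‖F‖ ^ 2 ≤ ‖G‖ ^ 2 := by
    rw [norm_eq_tsum_sq, norm_eq_tsum_sq]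
    exact ENNReal.toReal_mono (tsum_sq_ne_top G) hle
  nlinarith [norm_nonneg F, norm_nonneg G]

lemma ennreal_cs (f g : α → ℝ≥0) :
    (∑' a, ((f a : ℝ≥0∞) * (g a : ℝ≥0∞))) ^ 2
      ≤ (∑' a, (f a : ℝ≥0∞) ^ 2) * ∑' a, (g a : ℝ≥0∞) ^ 2 := by
  set R := (∑' a, (f a : ℝ≥0∞) ^ 2) * ∑' a, (g a : ℝ≥0∞) ^ 2 with hR
  have key : ∀ s : Finset α, (∑ a ∈ s, ((f a : ℝ≥0∞) * (g a : ℝ≥0∞))) * 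
      (∑ a ∈ s, ((f a : ℝ≥0∞) * (g a : ℝ≥0∞))) ≤ R := by
    intro s
    have hnn : ((∑ a ∈ s, f a * g a : ℝ≥0) : ℝ≥0∞) * ((∑ a ∈ s, f a * g a : ℝ≥0) : ℝ≥0∞)
        ≤ ((∑ a ∈ s, f a ^ 2 : ℝ≥0) : ℝ≥0∞) * ((∑ a ∈ s, g a ^ 2 : ℝ≥0) : ℝ≥0∞) := by
      rw [← ENNReal.coe_mul, ← ENNReal.coe_mul, ENNReal.coe_le_coe, ← _root_.sq]
      exact Finset.sum_mul_sq_le_sq_mul_sq s f g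
    calc (∑ a ∈ s, ((f a : ℝ≥0∞) * (g a : ℝ≥0∞))) * (∑ a ∈ s, ((f a : ℝ≥0∞) * (g a : ℝ≥0∞)))
        = ((∑ a ∈ s, f a * g a : ℝ≥0) : ℝ≥0∞) * ((∑ a ∈ s, f a * g a : ℝ≥0) : ℝ≥0∞) := by
          push_cast; rfl
      _ ≤ ((∑ a ∈ s, f a ^ 2 : ℝ≥0) : ℝ≥0∞) * ((∑ a ∈ s, g a ^ 2 : ℝ≥0) : ℝ≥0∞) := hnn
      _ = (∑ a ∈ s, (f a : ℝ≥0∞) ^ 2) * (∑ a ∈ s, (g a : ℝ≥0∞) ^ 2) := by push_cast; rfl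
      _ ≤ R := mul_le_mul' (ENNReal.sum_le_tsum s) (ENNReal.sum_le_tsum s)
  rw [_root_.sq, ENNReal.tsum_eq_iSup_sum, ENNReal.iSup_mul]
  refine iSup_le fun s => ?_
  rw [ENNReal.mul_iSup]
  refine iSup_le fun t => ?_
  calc (∑ a ∈ s, ((f a : ℝ≥0∞) * (g a : ℝ≥0∞))) * (∑ a ∈ t, ((f a : ℝ≥0∞) * (g a : ℝ≥0∞)))
      ≤ (∑ a ∈ s ∪ t, ((f a : ℝ≥0∞) * (g a : ℝ≥0∞)))
        * (∑ a ∈ s ∪ t, ((f a : ℝ≥0∞) * (g a : ℝ≥0∞))) :=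
        mul_le_mul' (Finset.sum_le_sum_of_subset Finset.subset_union_left)
          (Finset.sum_le_sum_of_subset Finset.subset_union_right)
    _ ≤ R := key _

end Helpers


section Domain

lemma lam_tsum (f : V → ℂ) :
    ∑' v, ((‖T.Lam (lamF T h) f v‖₊ : ℝ≥0∞)) ^ 2
      = ∑' u, (sqz T h u : ℝ≥0∞) * ((‖f u‖₊ : ℝ≥0∞)) ^ 2 := by
  have e : ∀ v, ((‖T.Lam (lamF T h) f v‖₊ : ℝ≥0∞)) ^ 2
      = (if T.HasParent v then ((wt T h v : ℝ≥0∞)) ^ 2 * ((‖f (T.par v)‖₊ : ℝ≥0∞)) ^ 2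
          else 0) := by
    intro v
    by_cases hv : T.HasParent v
    · rw [DirectedTree.Lam, if_pos hv, if_pos hv, nnnorm_mul, nnnorm_lamF]
      push_cast
      ring
    · rw [DirectedTree.Lam, if_neg hv, if_neg hv]
      simp
  rw [tsum_congr e,
    fubini T (fun v => ((wt T h v : ℝ≥0∞)) ^ 2) (fun u => ((‖f u‖₊ : ℝ≥0∞)) ^ 2)]
  refine tsum_congr fun u => ?_
  rw [chi_sum_wt T h, mul_comm]

lemma mem_domain_iff {f : lp (fun _ : V => ℂ) 2} :
    f ∈ T.domain (lamF T h)
      ↔ ∑' u, (sqz T h u : ℝ≥0∞) * ((‖f u‖₊ : ℝ≥0∞)) ^ 2 ≠ ⊤ := by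
  rw [DirectedTree.domain, Set.mem_setOf_eq, memℓp_two_iff, lam_tsum]

lemma shift_coe {f : lp (fun _ : V => ℂ) 2} (hf : f ∈ T.domain (lamF T h)) :
    ⇑(T.shift (lamF T h) f) = T.Lam (lamF T h) ⇑f := by
  rw [DirectedTree.shift, dif_pos hf]

lemma injOn : Set.InjOn (T.shift (lamF T h)) (T.domain (lamF T h)) := by
  intro f hf g hg hfg
  have hfg' : T.Lam (lamF T h) ⇑f = T.Lam (lamF T h) ⇑g := by
    rw [← shift_coe T h hf, ← shift_coe T h hg, hfg]
  refine lp.ext (funext fun u => ?_)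
  obtain ⟨v, hv⟩ : (T.chi u).Nonempty := ((h u).2).nonempty
  have h1 := congrFun hfg' v
  have hp : T.HasParent v := ⟨u, hv⟩
  rw [DirectedTree.Lam, DirectedTree.Lam] at h1
  simp only [if_pos hp, par_eq T hv] at h1
  exact mul_left_cancel₀ (lamF_ne T h v) h1

lemma zero_mem : (0 : lp (fun _ : V => ℂ) 2) ∈ T.domain (lamF T h) := by
  rw [mem_domain_iff T h]
  have e : ∀ u : V,
      (sqz T h u : ℝ≥0∞) * ((‖(0 : lp (fun _ : V => ℂ) 2) u‖₊ : ℝ≥0∞)) ^ 2 = 0 := by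
    intro u
    rw [lp.coeFn_zero]
    simp
  rw [tsum_congr e]
  simp

lemma add_mem {f g : lp (fun _ : V => ℂ) 2} (hf : f ∈ T.domain (lamF T h))
    (hg : g ∈ T.domain (lamF T h)) : f + g ∈ T.domain (lamF T h) := by
  have e : T.Lam (lamF T h) ⇑(f + g) = T.Lam (lamF T h) ⇑f + T.Lam (lamF T h) ⇑g := by
    funext v
    rw [lp.coeFn_add]
    simp only [DirectedTree.Lam, Pi.add_apply]
    by_cases hv : T.HasParent v <;> simp [hv, mul_add]
  show Memℓp (T.Lam (lamF T h) ⇑(f + g)) 2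
  rw [e]
  exact Memℓp.add hf hg

lemma single_mem (u : V) (a : ℂ) : lp.single 2 u a ∈ T.domain (lamF T h) := by
  rw [mem_domain_iff T h]
  have e : ∀ x : V, (sqz T h x : ℝ≥0∞) * ((‖(lp.single 2 u a : lp (fun _ : V => ℂ) 2) x‖₊ : ℝ≥0∞)) ^ 2
      = if x = u then (sqz T h u : ℝ≥0∞) * ((‖a‖₊ : ℝ≥0∞)) ^ 2 else 0 := fun x => by
    by_cases hx : x = u
    · subst hx
      rw [if_pos rfl, lp.single_apply_self (E := fun _ : V => ℂ)]
    · rw [if_neg hx, lp.single_apply_ne (E := fun _ : V => ℂ) 2 u a hx]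
      simp
  rw [tsum_congr e, tsum_ite_eq]
  exact ENNReal.mul_ne_top ENNReal.coe_ne_top
    (ENNReal.pow_ne_top ENNReal.coe_ne_top)

lemma dense_domain : Dense (T.domain (lamF T h)) := by
  intro f
  have hs : HasSum (fun i : V => lp.single 2 i (f i)) f :=
    lp.hasSum_single (by norm_num) f
  have hmem : ∀ sfin : Finset V,
      (∑ i ∈ sfin, lp.single 2 i (f i)) ∈ T.domain (lamF T h) := fun sfin =>
    Finset.sum_induction _ _ (fun _ _ ha hb => add_mem T h ha hb) (zero_mem T h)
      (fun i _ => single_mem T h i (f i))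
  exact mem_closure_of_tendsto hs (Filter.Eventually.of_forall hmem)

end Domain


section Adjoint

/-- the formal adjoint -/
noncomputable def adjF (g : V → ℂ) (u : V) : ℂ :=
  ∑' v : ↥(T.chi u), (starRingEnd ℂ) (lamF T h (v : V)) * g (v : V)

lemma cs_bound (g : V → ℂ) (u : V) :
    (∑' v : ↥(T.chi u), (wt T h (v : V) : ℝ≥0∞) * ((‖g (v : V)‖₊ : ℝ≥0∞))) ^ 2
      ≤ ∑' v : ↥(T.chi u), (sqz T h (v : V) : ℝ≥0∞) * ((‖g (v : V)‖₊ : ℝ≥0∞)) ^ 2 := by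
  set a : ↥(T.chi u) → ℝ≥0 := fun v => wt T h (v : V) * (NNReal.sqrt (sqz T h (v : V)))⁻¹
    with ha_def
  set b : ↥(T.chi u) → ℝ≥0 := fun v => NNReal.sqrt (sqz T h (v : V)) * ‖g (v : V)‖₊
    with hb_def
  have hsqrt : ∀ v : ↥(T.chi u), NNReal.sqrt (sqz T h (v : V)) ≠ 0 := fun v => by
    rw [Ne, NNReal.sqrt_eq_zero]
    exact sqz_ne T h _
  have hab : ∀ v : ↥(T.chi u), (a v : ℝ≥0∞) * (b v : ℝ≥0∞)
      = (wt T h (v : V) : ℝ≥0∞) * ((‖g (v : V)‖₊ : ℝ≥0∞)) := fun v => by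
    rw [← ENNReal.coe_mul, ← ENNReal.coe_mul]
    congr 1
    have e : a v * b v = wt T h (v : V)
        * ((NNReal.sqrt (sqz T h (v : V)))⁻¹ * NNReal.sqrt (sqz T h (v : V)))
        * ‖g (v : V)‖₊ := by
      rw [ha_def, hb_def]; ring
    rw [e, inv_mul_cancel₀ (hsqrt v), mul_one]
  have ha : ∀ v : ↥(T.chi u), (a v : ℝ≥0∞) ^ 2
      = (wt T h (v : V) : ℝ≥0∞) ^ 2 / (sqz T h (v : V) : ℝ≥0∞) := fun v => by
    rw [show ((wt T h (v : V) : ℝ≥0∞)) ^ 2 / (sqz T h (v : V) : ℝ≥0∞)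
        = ((wt T h (v : V) ^ 2 / sqz T h (v : V) : ℝ≥0) : ℝ≥0∞) by
      rw [ENNReal.coe_div (sqz_ne T h _)]; push_cast; rfl]
    rw [← ENNReal.coe_pow]
    congr 1
    simp only [ha_def]
    rw [mul_pow, inv_pow, NNReal.sq_sqrt, div_eq_mul_inv]
  have hb : ∀ v : ↥(T.chi u), (b v : ℝ≥0∞) ^ 2
      = (sqz T h (v : V) : ℝ≥0∞) * ((‖g (v : V)‖₊ : ℝ≥0∞)) ^ 2 := fun v => by
    rw [← ENNReal.coe_pow, hb_def, mul_pow, NNReal.sq_sqrt]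
    push_cast
    ring
  calc (∑' v : ↥(T.chi u), (wt T h (v : V) : ℝ≥0∞) * ((‖g (v : V)‖₊ : ℝ≥0∞))) ^ 2
      = (∑' v : ↥(T.chi u), (a v : ℝ≥0∞) * (b v : ℝ≥0∞)) ^ 2 := by
        rw [tsum_congr hab]
    _ ≤ (∑' v : ↥(T.chi u), (a v : ℝ≥0∞) ^ 2) * ∑' v : ↥(T.chi u), (b v : ℝ≥0∞) ^ 2 :=
        ennreal_cs a b
    _ ≤ 1 * ∑' v : ↥(T.chi u), (sqz T h (v : V) : ℝ≥0∞) * ((‖g (v : V)‖₊ : ℝ≥0∞)) ^ 2 := by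
        refine mul_le_mul' ?_ (le_of_eq (tsum_congr hb))
        rw [tsum_congr ha]
        exact chi_sum_hypo T h u
    _ = _ := one_mul _

lemma chi_wt_tsum_ne_top {g : V → ℂ} {u : V}
    (hB : ∑' v : ↥(T.chi u), (sqz T h (v : V) : ℝ≥0∞) * ((‖g (v : V)‖₊ : ℝ≥0∞)) ^ 2 ≠ ⊤) :
    ∑' v : ↥(T.chi u), (wt T h (v : V) : ℝ≥0∞) * ((‖g (v : V)‖₊ : ℝ≥0∞)) ≠ ⊤ := by
  intro htop
  apply hB
  have := cs_bound T h g u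
  rw [htop] at this
  simpa using (top_le_iff.1 (le_trans (by simp) this))

lemma adj_summable {g : V → ℂ} {u : V}
    (hB : ∑' v : ↥(T.chi u), (sqz T h (v : V) : ℝ≥0∞) * ((‖g (v : V)‖₊ : ℝ≥0∞)) ^ 2 ≠ ⊤) :
    Summable fun v : ↥(T.chi u) => (starRingEnd ℂ) (lamF T h (v : V)) * g (v : V) := by
  refine Summable.of_nnnorm ?_
  have e : ∀ v : ↥(T.chi u), ‖(starRingEnd ℂ) (lamF T h (v : V)) * g (v : V)‖₊
      = wt T h (v : V) * ‖g (v : V)‖₊ := fun v => by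
    rw [conj_lamF, nnnorm_mul, nnnorm_lamF]
  rw [summable_congr e, ← ENNReal.tsum_coe_ne_top_iff_summable]
  have e2 : ∑' v : ↥(T.chi u), ((wt T h (v : V) * ‖g (v : V)‖₊ : ℝ≥0) : ℝ≥0∞)
      = ∑' v : ↥(T.chi u), (wt T h (v : V) : ℝ≥0∞) * ((‖g (v : V)‖₊ : ℝ≥0∞)) :=
    tsum_congr fun v => by push_cast; rfl
  rw [e2]
  exact chi_wt_tsum_ne_top T h hB

lemma adjF_bound {g : V → ℂ} {u : V}
    (hB : ∑' v : ↥(T.chi u), (sqz T h (v : V) : ℝ≥0∞) * ((‖g (v : V)‖₊ : ℝ≥0∞)) ^ 2 ≠ ⊤) :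
    ((‖adjF T h g u‖₊ : ℝ≥0∞)) ^ 2
      ≤ ∑' v : ↥(T.chi u), (sqz T h (v : V) : ℝ≥0∞) * ((‖g (v : V)‖₊ : ℝ≥0∞)) ^ 2 := by
  refine le_trans ?_ (cs_bound T h g u)
  have hsummable : Summable fun v : ↥(T.chi u) =>
      ‖(starRingEnd ℂ) (lamF T h (v : V)) * g (v : V)‖₊ := by
    have := adj_summable T h (g := g) (u := u) hB
    -- recover nnnorm summability
    have e : ∀ v : ↥(T.chi u), ‖(starRingEnd ℂ) (lamF T h (v : V)) * g (v : V)‖₊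
        = wt T h (v : V) * ‖g (v : V)‖₊ := fun v => by
      rw [conj_lamF, nnnorm_mul, nnnorm_lamF]
    rw [summable_congr e, ← ENNReal.tsum_coe_ne_top_iff_summable]
    have e2 : ∑' v : ↥(T.chi u), ((wt T h (v : V) * ‖g (v : V)‖₊ : ℝ≥0) : ℝ≥0∞)
        = ∑' v : ↥(T.chi u), (wt T h (v : V) : ℝ≥0∞) * ((‖g (v : V)‖₊ : ℝ≥0∞)) :=
      tsum_congr fun v => by push_cast; rfl
    rw [e2]
    exact chi_wt_tsum_ne_top T h hB
  have h1 : ‖adjF T h g u‖₊ ≤ ∑' v : ↥(T.chi u),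
      ‖(starRingEnd ℂ) (lamF T h (v : V)) * g (v : V)‖₊ := nnnorm_tsum_le hsummable
  have h2 : ((∑' v : ↥(T.chi u), ‖(starRingEnd ℂ) (lamF T h (v : V)) * g (v : V)‖₊ : ℝ≥0) : ℝ≥0∞)
      ≤ ∑' v : ↥(T.chi u), (wt T h (v : V) : ℝ≥0∞) * ((‖g (v : V)‖₊ : ℝ≥0∞)) := by
    rw [ENNReal.coe_tsum hsummable]
    refine ENNReal.tsum_le_tsum fun v => ?_
    rw [conj_lamF, nnnorm_mul, nnnorm_lamF]
    push_cast
    exact le_rfl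
  calc ((‖adjF T h g u‖₊ : ℝ≥0∞)) ^ 2
      ≤ ((∑' v : ↥(T.chi u), ‖(starRingEnd ℂ) (lamF T h (v : V)) * g (v : V)‖₊ : ℝ≥0) : ℝ≥0∞) ^ 2 := by
        gcongr
    _ ≤ (∑' v : ↥(T.chi u), (wt T h (v : V) : ℝ≥0∞) * ((‖g (v : V)‖₊ : ℝ≥0∞))) ^ 2 := by
        gcongr

end Adjoint


section AdjointLp

lemma sum_B_le (g : V → ℂ) :
    ∑' u : V, ∑' v : ↥(T.chi u), (sqz T h (v : V) : ℝ≥0∞) * ((‖g (v : V)‖₊ : ℝ≥0∞)) ^ 2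
      ≤ ∑' u : V, (sqz T h u : ℝ≥0∞) * ((‖g u‖₊ : ℝ≥0∞)) ^ 2 := by
  have hf := fubini T (fun v => (sqz T h v : ℝ≥0∞) * ((‖g v‖₊ : ℝ≥0∞)) ^ 2) (fun _ => 1)
  calc ∑' u : V, ∑' v : ↥(T.chi u), (sqz T h (v : V) : ℝ≥0∞) * ((‖g (v : V)‖₊ : ℝ≥0∞)) ^ 2
      = ∑' u : V, (1 : ℝ≥0∞)
          * ∑' v : ↥(T.chi u), (sqz T h (v : V) : ℝ≥0∞) * ((‖g (v : V)‖₊ : ℝ≥0∞)) ^ 2 :=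
        tsum_congr fun u => (one_mul _).symm
    _ = ∑' v : V, (if T.HasParent v
          then (sqz T h v : ℝ≥0∞) * ((‖g v‖₊ : ℝ≥0∞)) ^ 2 * 1 else 0) := hf.symm
    _ ≤ ∑' v : V, (sqz T h v : ℝ≥0∞) * ((‖g v‖₊ : ℝ≥0∞)) ^ 2 :=
        ENNReal.tsum_le_tsum fun v => by split <;> simp

lemma B_ne_top {g : lp (fun _ : V => ℂ) 2} (hg : g ∈ T.domain (lamF T h)) (u : V) :
    ∑' v : ↥(T.chi u), (sqz T h (v : V) : ℝ≥0∞) * ((‖g (v : V)‖₊ : ℝ≥0∞)) ^ 2 ≠ ⊤ := by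
  intro htop
  refine (mem_domain_iff T h).1 hg (top_le_iff.1 ?_)
  calc (⊤ : ℝ≥0∞)
      = ∑' v : ↥(T.chi u), (sqz T h (v : V) : ℝ≥0∞) * ((‖g (v : V)‖₊ : ℝ≥0∞)) ^ 2 := htop.symm
    _ ≤ ∑' u' : V, ∑' v : ↥(T.chi u'), (sqz T h (v : V) : ℝ≥0∞) * ((‖g (v : V)‖₊ : ℝ≥0∞)) ^ 2 :=
        ENNReal.le_tsum u
    _ ≤ _ := sum_B_le T h ⇑g

lemma adj_tsum_le {g : lp (fun _ : V => ℂ) 2} (hg : g ∈ T.domain (lamF T h)) :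
    ∑' u : V, ((‖adjF T h ⇑g u‖₊ : ℝ≥0∞)) ^ 2
      ≤ ∑' u : V, (sqz T h u : ℝ≥0∞) * ((‖g u‖₊ : ℝ≥0∞)) ^ 2 :=
  le_trans (ENNReal.tsum_le_tsum fun u => adjF_bound T h (B_ne_top T h hg u))
    (sum_B_le T h ⇑g)

lemma adjF_memℓp {g : lp (fun _ : V => ℂ) 2} (hg : g ∈ T.domain (lamF T h)) :
    Memℓp (adjF T h ⇑g) 2 := by
  rw [memℓp_two_iff]
  intro htop
  exact (mem_domain_iff T h).1 hg (top_le_iff.1 (htop ▸ adj_tsum_le T h hg))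

/-- the adjoint vector -/
noncomputable def adjLp (g : lp (fun _ : V => ℂ) 2) (hg : g ∈ T.domain (lamF T h)) :
    lp (fun _ : V => ℂ) 2 := ⟨adjF T h ⇑g, adjF_memℓp T h hg⟩

lemma adjLp_apply {g : lp (fun _ : V => ℂ) 2} (hg : g ∈ T.domain (lamF T h)) (u : V) :
    (adjLp T h g hg : ∀ _ : V, ℂ) u = adjF T h ⇑g u := rfl

lemma shift_tsum_eq {g : lp (fun _ : V => ℂ) 2} (hg : g ∈ T.domain (lamF T h)) :
    ∑' v : V, ((‖(T.shift (lamF T h) g : ∀ _ : V, ℂ) v‖₊ : ℝ≥0∞)) ^ 2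
      = ∑' u : V, (sqz T h u : ℝ≥0∞) * ((‖g u‖₊ : ℝ≥0∞)) ^ 2 := by
  rw [shift_coe T h hg, lam_tsum T h]

lemma adjLp_norm_le {g : lp (fun _ : V => ℂ) 2} (hg : g ∈ T.domain (lamF T h)) :
    ‖adjLp T h g hg‖ ≤ ‖T.shift (lamF T h) g‖ := by
  refine norm_le_of_tsum_le ?_
  rw [shift_tsum_eq T h hg]
  exact adj_tsum_le T h hg

lemma adj_identity {f g : lp (fun _ : V => ℂ) 2} (hf : f ∈ T.domain (lamF T h))
    (hg : g ∈ T.domain (lamF T h)) :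
    (inner ℂ (T.shift (lamF T h) f) g : ℂ) = inner ℂ f (adjLp T h g hg) := by
  rw [lp.inner_eq_tsum, lp.inner_eq_tsum]
  simp only [RCLike.inner_apply']
  set φ : V → ℂ := fun v => (starRingEnd ℂ) (T.Lam (lamF T h) (⇑f) v) * g v with hφ
  have hstep1 : ∀ v : V, (starRingEnd ℂ) ((T.shift (lamF T h) f : ∀ _ : V, ℂ) v) * g v
      = φ v := fun v => by rw [shift_coe T h hf]
  have hsummable : Summable φ := by
    have := lp.summable_inner (𝕜 := ℂ) (T.shift (lamF T h) f) g
    simp only [RCLike.inner_apply'] at this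
    exact this.congr hstep1
  rw [tsum_congr hstep1]
  have hsupp : Function.support φ ⊆ T.Vcirc := by
    intro v hv
    by_contra hc
    apply hv
    have hc' : ¬ T.HasParent v := hc
    rw [hφ]
    simp only [DirectedTree.Lam, if_neg hc', map_zero, zero_mul]
  have hsig : Summable fun p : Σ u : V, ↥(T.chi u) => φ ((sigmaEquiv T p : V)) := by
    exact ((sigmaEquiv T).summable_iff (f := fun x : ↥T.Vcirc => φ (x : V))).2
      (hsummable.subtype _)
  calc ∑' v : V, φ v
      = ∑' x : ↥T.Vcirc, φ (x : V) := (tsum_subtype_eq_of_support_subset hsupp).symm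
    _ = ∑' p : Σ u : V, ↥(T.chi u), φ ((sigmaEquiv T p : V)) :=
        (Equiv.tsum_eq (sigmaEquiv T) (fun x : ↥T.Vcirc => φ (x : V))).symm
    _ = ∑' u : V, ∑' v : ↥(T.chi u), φ (v : V) := Summable.tsum_sigma hsig
    _ = ∑' u : V, (starRingEnd ℂ) (f u) * adjF T h ⇑g u := ?_
  refine tsum_congr fun u => ?_
  have hterm : ∀ v : ↥(T.chi u), φ (v : V)
      = (starRingEnd ℂ) (f u) * ((starRingEnd ℂ) (lamF T h (v : V)) * g (v : V)) := by
    intro v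
    have hp : T.HasParent (v : V) := ⟨u, v.2⟩
    rw [hφ]
    simp only [DirectedTree.Lam, if_pos hp, par_eq T v.2, map_mul]
    ring
  rw [tsum_congr hterm, tsum_mul_left, adjF]

end AdjointLp


section Final

lemma shift_zero : T.shift (lamF T h) 0 = 0 := by
  refine lp.ext ?_
  rw [shift_coe T h (zero_mem T h)]
  funext v
  rw [lp.coeFn_zero]
  simp only [DirectedTree.Lam, lp.coeFn_zero, Pi.zero_apply, mul_zero, ite_self]

lemma square_eq {f : lp (fun _ : V => ℂ) 2} (hsq : f ∈ T.squareDomain (lamF T h)) :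
    f = 0 := by
  obtain ⟨hf, hsf⟩ := hsq
  rw [mem_domain_iff T h] at hsf
  have e : ∀ u : V,
      (sqz T h u : ℝ≥0∞) * ((‖(T.shift (lamF T h) f : ∀ _ : V, ℂ) u‖₊ : ℝ≥0∞)) ^ 2
        = (if T.HasParent u
            then ((wt T h u : ℝ≥0∞)) ^ 2 * (sqz T h u : ℝ≥0∞) * ((‖f (T.par u)‖₊ : ℝ≥0∞)) ^ 2
            else 0) := by
    intro u
    rw [shift_coe T h hf, DirectedTree.Lam]
    by_cases hu : T.HasParent u
    · rw [if_pos hu, if_pos hu, nnnorm_mul, nnnorm_lamF]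
      push_cast
      ring
    · rw [if_neg hu, if_neg hu]
      simp
  rw [tsum_congr e,
    fubini T (fun u => ((wt T h u : ℝ≥0∞)) ^ 2 * (sqz T h u : ℝ≥0∞))
      (fun x => ((‖f x‖₊ : ℝ≥0∞)) ^ 2)] at hsf
  have hall : ∀ x : V, f x = 0 := by
    intro x
    by_contra hx
    apply hsf
    refine top_le_iff.1 (le_trans (le_of_eq ?_) (ENNReal.le_tsum x))
    rw [chi_sum_top T h x, ENNReal.mul_top]
    intro hzero
    apply hx
    have : (‖f x‖₊ : ℝ≥0∞) = 0 := by
      simpa using pow_eq_zero_iff (n := 2) (by norm_num) |>.1 hzero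
    rw [ENNReal.coe_eq_zero, nnnorm_eq_zero] at this
    exact this
  refine lp.ext (funext fun x => ?_)
  rw [hall x, lp.coeFn_zero, Pi.zero_apply]

lemma hypo : T.IsHyponormal (lamF T h) := by
  refine ⟨dense_domain T h, ?_, ?_⟩
  · intro g hg
    exact ⟨adjLp T h g hg, fun f hf => adj_identity T h hf hg⟩
  · intro f hf h' hprop
    have huniq : h' = adjLp T h f hf := by
      have hmem : T.domain (lamF T h)
          ⊆ {x : lp (fun _ : V => ℂ) 2 | (inner ℂ x (h' - adjLp T h f hf) : ℂ) = 0} := by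
        intro g hg
        have h1 := hprop g hg
        have h2 := adj_identity T h hg hf
        simp only [Set.mem_setOf_eq, inner_sub_right]
        rw [← h1, h2, sub_self]
      have hclosed : IsClosed {x : lp (fun _ : V => ℂ) 2 |
          (inner ℂ x (h' - adjLp T h f hf) : ℂ) = 0} :=
        isClosed_eq (Continuous.inner continuous_id continuous_const) continuous_const
      have hall : ∀ x : lp (fun _ : V => ℂ) 2, (inner ℂ x (h' - adjLp T h f hf) : ℂ) = 0 := by
        intro x
        have hx : x ∈ closure (T.domain (lamF T h)) := dense_domain T h x
        have := (IsClosed.closure_subset_iff hclosed).2 hmem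
        exact this hx
      have hz : h' - adjLp T h f hf = 0 := by
        have := hall (h' - adjLp T h f hf)
        rwa [inner_self_eq_zero] at this
      rw [← sub_eq_zero]
      exact hz
    rw [huniq]
    exact adjLp_norm_le T h hf

end Final

end Stmt14

/-- Theorem 4.2: if every vertex has countably infinitely many children, then there is a
family of nonzero weights such that `S_λ` is injective and hyponormal and
`D(S_λ²) = {0}`. -/
theorem stmt14 {V : Type} (T : DirectedTree V)
    (h : ∀ u : V, (T.chi u).Countable ∧ (T.chi u).Infinite) :
    ∃ lam : V → ℂ, (∀ v ∈ T.Vcirc, lam v ≠ 0) ∧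
      Set.InjOn (T.shift lam) (T.domain lam) ∧ T.IsHyponormal lam ∧
      T.squareDomain lam = ({0} : Set (lp (fun _ : V => ℂ) 2)) := by
  refine ⟨Stmt14.lamF T h, fun v _ => Stmt14.lamF_ne T h v, Stmt14.injOn T h,
    Stmt14.hypo T h, ?_⟩
  ext f
  simp only [Set.mem_singleton_iff]
  constructor
  · exact fun hsq => Stmt14.square_eq T h hsq
  · rintro rfl
    exact ⟨Stmt14.zero_mem T h, by
      rw [Stmt14.shift_zero T h]
      exact Stmt14.zero_mem T h⟩
end
end

section
/- Let T be a directed tree such that the set Chi(u) of children of u is countably infinite for every u ∈ V. Then for each θ ∈ (0, ∞) and each u ∈ V there exists a family {λ_v}_{v∈Des(u)} of real numbers in (0, 1) ∪ {√θ} with λ_u² = θ such that for every v ∈ Des(u): (Σ_{w∈Chi(v)} λ_w²) · λ_v² = 1, Σ_{w∈Chi(v)} λ_w⁴ ≤ 1, and λ_w ∈ (0, 1) for all w ∈ Des(u) \ {u}. -/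
open scoped ENNReal NNReal Classical

noncomputable section

namespace Stmt15Aux2

def eps (c : ℝ) : ℝ := min c (min (c^2) 1) / 2

def q (c : ℝ) (j : ℕ) : ℝ := (eps c / c) * (1 - eps c)^j

variable {c : ℝ}

lemma eps_pos (hc : 0 < c) : 0 < eps c := by
  unfold eps
  have : 0 < c^2 := by positivity
  have h2 : 0 < min c (min (c^2) 1) := lt_min hc (lt_min this one_pos)
  positivity

lemma eps_le_half_c : eps c ≤ c / 2 := by
  unfold eps; gcongr; exact min_le_left _ _

lemma eps_le_half_csq : eps c ≤ c^2 / 2 := by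
  unfold eps; gcongr; exact (min_le_right _ _).trans (min_le_left _ _)

lemma eps_le_half : eps c ≤ 1 / 2 := by
  unfold eps; gcongr; exact (min_le_right _ _).trans (min_le_right _ _)

lemma r_nonneg : 0 ≤ 1 - eps c := by
  have := eps_le_half (c := c); linarith

lemma r_lt_one (hc : 0 < c) : 1 - eps c < 1 := by
  have := eps_pos hc; linarith

variable (hc : 0 < c)
include hc

lemma q_pos (j : ℕ) : 0 < q c j := by
  have h1 := eps_pos hc
  have h2 := eps_le_half (c := c)
  unfold q
  have : (0:ℝ) < 1 - eps c := by linarith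
  positivity

lemma q_lt_one (j : ℕ) : q c j < 1 := by
  have h1 := eps_pos hc
  have h2 := eps_le_half_c (c := c)
  have hr0 := r_nonneg (c := c)
  have hr1 := r_lt_one hc
  unfold q
  calc (eps c / c) * (1 - eps c)^j ≤ (eps c / c) * 1 := by
        apply mul_le_mul_of_nonneg_left (pow_le_one₀ hr0 hr1.le) (by positivity)
    _ = eps c / c := mul_one _
    _ ≤ (c/2) / c := by gcongr
    _ = 1/2 := by field_simp
    _ < 1 := by norm_num

lemma q_summable : Summable (q c) :=
  Summable.mul_left _ (summable_geometric_of_lt_one (r_nonneg) (r_lt_one hc))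

lemma q_tsum : ∑' j, q c j = 1 / c := by
  unfold q
  rw [tsum_mul_left, tsum_geometric_of_lt_one r_nonneg (r_lt_one hc)]
  have h1 := eps_pos hc
  have : 1 - (1 - eps c) = eps c := by ring
  rw [this]
  field_simp

lemma q_sq_summable : Summable (fun j => q c j ^ 2) := by
  have : (fun j => q c j ^ 2) = fun j => (eps c / c)^2 * ((1 - eps c)^2)^j := by
    funext j; unfold q; rw [mul_pow, ← pow_mul, ← pow_mul, mul_comm j 2]
  rw [this]
  have hr0 := r_nonneg (c := c)
  have hr1 := r_lt_one hc
  exact Summable.mul_left _ (summable_geometric_of_lt_one (by positivity)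
    (by nlinarith))

lemma q_sq_tsum_le : ∑' j, q c j ^ 2 ≤ 1 := by
  have h1 := eps_pos hc
  have hr0 := r_nonneg (c := c)
  have hr1 := r_lt_one hc
  have heq : (fun j => q c j ^ 2) = fun j => (eps c / c)^2 * ((1 - eps c)^2)^j := by
    funext j; unfold q; rw [mul_pow, ← pow_mul, ← pow_mul, mul_comm j 2]
  rw [heq, tsum_mul_left, tsum_geometric_of_lt_one (by positivity) (by nlinarith)]
  have hden : eps c ≤ 1 - (1 - eps c)^2 := by nlinarith
  have hpos : 0 < 1 - (1 - eps c)^2 := lt_of_lt_of_le h1 hden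
  calc (eps c / c)^2 * (1 - (1 - eps c)^2)⁻¹
      ≤ (eps c / c)^2 * (eps c)⁻¹ := by
        apply mul_le_mul_of_nonneg_left _ (by positivity)
        exact inv_anti₀ h1 hden
    _ = eps c / c^2 := by field_simp
    _ ≤ (c^2/2) / c^2 := by
        have := eps_le_half_csq (c := c); gcongr
    _ = 1/2 := by field_simp
    _ ≤ 1 := by norm_num

end Stmt15Aux2


namespace Stmt15Aux

variable {V : Type} (T : DirectedTree V)

def iter : ℕ → V → V → Prop
  | 0, x, y => x = y
  | n+1, x, y => ∃ z, iter n x z ∧ T.edge z y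

lemma reflTransGen_iff_iter {x y : V} :
    Relation.ReflTransGen T.edge x y ↔ ∃ n, iter T n x y := by
  constructor
  · intro h
    induction h with
    | refl => exact ⟨0, rfl⟩
    | tail _ he ih => obtain ⟨n, hn⟩ := ih; exact ⟨n+1, _, hn, he⟩
  · rintro ⟨n, hn⟩
    induction n generalizing y with
    | zero => cases hn; exact Relation.ReflTransGen.refl
    | succ k ih => obtain ⟨z, hz, he⟩ := hn; exact Relation.ReflTransGen.tail (ih hz) he

lemma iter_chain {n : ℕ} {x y : V} (h : iter T n x y) :
    ∃ f : ℕ → V, f 0 = x ∧ f n = y ∧ ∀ k < n, T.edge (f k) (f (k+1)) := by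
  induction n generalizing y with
  | zero => cases h; exact ⟨fun _ => x, rfl, rfl, by omega⟩
  | succ k ih =>
    obtain ⟨z, hz, he⟩ := h
    obtain ⟨f, hf0, hfk, hfe⟩ := ih hz
    refine ⟨fun i => if i ≤ k then f i else y, by simp [hf0], by simp, ?_⟩
    intro i hi
    rcases lt_or_eq_of_le (Nat.lt_succ_iff.mp hi) with hik | hik
    · simpa [hik.le, Nat.succ_le_of_lt hik] using hfe i hik
    · subst hik; simpa [hfk] using he

lemma chain_iter (f : ℕ → V) (a : ℕ) :
    ∀ d, (∀ k, a ≤ k → k < a + d → T.edge (f k) (f (k+1))) → iter T d (f a) (f (a + d)) := by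
  intro d
  induction d with
  | zero => intro _; exact rfl
  | succ m ih =>
    intro hk
    exact ⟨f (a + m), ih (fun k h1 h2 => hk k h1 (by omega)),
      hk (a+m) (by omega) (by omega)⟩

lemma no_cycle : ∀ n : ℕ, ∀ x : V, ¬ iter T (n+1) x x := by
  intro n
  induction n using Nat.strong_induction_on with
  | _ n IH =>
    intro x hx
    obtain ⟨f, hf0, hfn, hfe⟩ := iter_chain T hx
    by_cases hinj : ∃ i j, i < j ∧ j ≤ n ∧ f i = f j
    · obtain ⟨i, j, hij, hjn, hfij⟩ := hinj
      have hiter : iter T (j - i) (f i) (f (i + (j - i))) :=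
        chain_iter T f i (j-i) (fun k h1 h2 => hfe k (by omega))
      rw [show i + (j - i) = j by omega, ← hfij] at hiter
      rw [show j - i = (j - i - 1) + 1 by omega] at hiter
      exact IH (j - i - 1) (by omega) (f i) hiter
    · push_neg at hinj
      -- f is injective on [0, n]
      match n, hfe, hfn, IH, hinj with
      | 0, hfe, hfn, IH, hinj =>
        have h1 := hfe 0 (by omega)
        rw [hf0, show f 1 = x from hfn] at h1
        exact T.antisymm x x h1 h1
      | 1, hfe, hfn, IH, hinj =>
        have h1 := hfe 0 (by omega)
        have h2 := hfe 1 (by omega)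
        rw [show f 2 = x from hfn, ← hf0] at h2
        exact T.antisymm _ _ h1 h2
      | (m+2), hfe, hfn, IH, hinj =>
        set n := m + 2 with hn
        set G := SimpleGraph.fromRel T.edge with hG
        have hne : ∀ i j, i < j → j ≤ n → f i ≠ f j := hinj
        have hGadj : ∀ i, i ≤ n → G.Adj (f i) (f (i+1)) := by
          intro i hi
          rcases lt_or_eq_of_le hi with h | h
          · exact ⟨hne i (i+1) (by omega) (by omega), Or.inl (hfe i (by omega))⟩
          · subst h
            refine ⟨?_, Or.inl (hfe n (by omega))⟩
            rw [hfn, ← hf0]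
            exact fun hc => hne 0 n (by omega) le_rfl hc.symm
        have walk : ∀ m' : ℕ, ∀ i : ℕ, i + m' = n + 1 → 1 ≤ i →
            ∃ W : G.Walk (f i) (f (n+1)), ∀ e ∈ W.edges,
              ∃ j, i ≤ j ∧ j ≤ n ∧ e = s(f j, f (j+1)) := by
          intro m'
          induction m' with
          | zero =>
            intro i hi _
            rw [show i = n + 1 by omega]
            exact ⟨SimpleGraph.Walk.nil, by simp⟩
          | succ k ihk =>
            intro i hi h1i
            obtain ⟨W', hW'⟩ := ihk (i+1) (by omega) (by omega)
            refine ⟨SimpleGraph.Walk.cons (hGadj i (by omega)) W', ?_⟩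
            intro e he
            rw [SimpleGraph.Walk.edges_cons, List.mem_cons] at he
            rcases he with he | he
            · exact ⟨i, le_rfl, by omega, he⟩
            · obtain ⟨j, hj1, hj2, hj3⟩ := hW' e he
              exact ⟨j, by omega, hj2, hj3⟩
        obtain ⟨W, hW⟩ := walk n 1 (by omega) le_rfl
        have hadj01 : G.Adj (f 0) (f 1) := hGadj 0 (by omega)
        have hbridge := (SimpleGraph.isAcyclic_iff_forall_adj_isBridge.mp
          T.isTree.2) hadj01
        rw [SimpleGraph.isBridge_iff_adj_and_forall_walk_mem_edges] at hbridge
        have hfn0 : f (n+1) = f 0 := by rw [hfn, hf0]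
        have hmem := hbridge ((W.copy rfl hfn0).reverse)
        rw [SimpleGraph.Walk.edges_reverse, List.mem_reverse,
          SimpleGraph.Walk.edges_copy] at hmem
        obtain ⟨j, hj1, hj2, hj3⟩ := hW _ hmem
        rw [Sym2.eq_iff] at hj3
        rcases hj3 with ⟨h01, _⟩ | ⟨h0j, h1j⟩
        · exact hne 0 j (by omega) hj2 h01
        · rcases lt_or_eq_of_le hj2 with hjlt | hjeq
          · exact hne 0 (j+1) (by omega) (by omega) h0j
          · subst hjeq
            exact hne 1 n (by omega) le_rfl h1j

lemma iter_unique {x : V} : ∀ n m (v : V), iter T n x v → iter T m x v → n = m := by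
  intro n
  induction n with
  | zero =>
    intro m v h1 h2
    cases h1
    cases m with
    | zero => rfl
    | succ k => exact absurd h2 (no_cycle T k x)
  | succ k ih =>
    intro m v h1 h2
    cases m with
    | zero => cases h2; exact absurd h1 (no_cycle T k x)
    | succ l =>
      obtain ⟨z, hz, he⟩ := h1
      obtain ⟨z', hz', he'⟩ := h2
      have : z = z' := T.parent_unique z z' v he he'
      subst this
      rw [ih l z hz hz']

lemma edge_par {v : V} (h : T.HasParent v) : T.edge (T.par v) v := by
  unfold DirectedTree.par
  rw [dif_pos h]
  exact h.choose_spec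

lemma par_eq {v w : V} (h : T.edge v w) : T.par w = v :=
  T.parent_unique _ _ _ (edge_par T ⟨v, h⟩) h

end Stmt15Aux


namespace Stmt15Aux
variable {V : Type} (T : DirectedTree V)

def enum (h : ∀ u : V, (T.chi u).Countable ∧ (T.chi u).Infinite) (v : V) :
    (T.chi v) ≃ ℕ :=
  haveI := (h v).1.to_subtype
  haveI := (h v).2.to_subtype
  nonempty_equiv_of_countable.some

def num (h : ∀ u : V, (T.chi u).Countable ∧ (T.chi u).Infinite) (w : V) : ℕ :=
  if hp : T.HasParent w then enum T h (T.par w) ⟨w, edge_par T hp⟩ else 0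

lemma num_eq (h : ∀ u : V, (T.chi u).Countable ∧ (T.chi u).Infinite) {v w : V}
    (hvw : T.edge v w) : num T h w = enum T h v ⟨w, hvw⟩ := by
  have hp : T.HasParent w := ⟨v, hvw⟩
  unfold num
  rw [dif_pos hp]
  have hpv : T.par w = v := par_eq T hvw
  subst hpv
  rfl

def F (h : ∀ u : V, (T.chi u).Countable ∧ (T.chi u).Infinite) (θ : ℝ) : ℕ → V → ℝ
  | 0 => fun _ => θ
  | n+1 => fun w => Stmt15Aux2.q (F h θ n (T.par w)) (num T h w)

lemma F_pos (h : ∀ u : V, (T.chi u).Countable ∧ (T.chi u).Infinite) {θ : ℝ}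
    (hθ : 0 < θ) : ∀ n v, 0 < F T h θ n v := by
  intro n
  induction n with
  | zero => intro v; exact hθ
  | succ k ih => intro v; exact Stmt15Aux2.q_pos (ih (T.par v)) _

def cfun (h : ∀ u : V, (T.chi u).Countable ∧ (T.chi u).Infinite) (θ : ℝ) (u v : V) : ℝ :=
  if hv : ∃ n, iter T n u v then F T h θ (Nat.find hv) v else 1

lemma cfun_pos (h : ∀ u : V, (T.chi u).Countable ∧ (T.chi u).Infinite) {θ : ℝ}
    (hθ : 0 < θ) (u v : V) : 0 < cfun T h θ u v := by
  unfold cfun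
  split
  · exact F_pos T h hθ _ _
  · norm_num

lemma cfun_u (h : ∀ u : V, (T.chi u).Countable ∧ (T.chi u).Infinite) (θ : ℝ) (u : V) :
    cfun T h θ u u = θ := by
  have hv : ∃ n, iter T n u u := ⟨0, rfl⟩
  unfold cfun
  rw [dif_pos hv]
  have h0 : Nat.find hv = 0 := (Nat.find_eq_zero hv).mpr rfl
  rw [h0]
  rfl

lemma cfun_child (h : ∀ u : V, (T.chi u).Countable ∧ (T.chi u).Infinite) (θ : ℝ)
    {u v w : V} (hv : ∃ n, iter T n u v) (hvw : T.edge v w) :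
    cfun T h θ u w = Stmt15Aux2.q (cfun T h θ u v) (num T h w) := by
  have hw : ∃ n, iter T n u w := ⟨Nat.find hv + 1, v, Nat.find_spec hv, hvw⟩
  have hfw : Nat.find hw = Nat.find hv + 1 :=
    iter_unique T _ _ _ (Nat.find_spec hw) ⟨v, Nat.find_spec hv, hvw⟩
  unfold cfun
  rw [dif_pos hw, dif_pos hv, hfw]
  show Stmt15Aux2.q (F T h θ (Nat.find hv) (T.par w)) (num T h w) = _
  rw [par_eq T hvw]

lemma cfun_lt_one (h : ∀ u : V, (T.chi u).Countable ∧ (T.chi u).Infinite) {θ : ℝ}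
    (hθ : 0 < θ) {u w : V} (hw : ∃ n, iter T n u w) (hne : w ≠ u) :
    cfun T h θ u w < 1 := by
  unfold cfun
  rw [dif_pos hw]
  obtain ⟨k, hk⟩ : ∃ k, Nat.find hw = k + 1 := by
    cases hnf : Nat.find hw with
    | zero =>
      have : u = w := (Nat.find_eq_zero hw).mp hnf
      exact absurd this.symm hne
    | succ k => exact ⟨k, rfl⟩
  rw [hk]
  exact Stmt15Aux2.q_lt_one (F_pos T h hθ k (T.par w)) _

end Stmt15Aux

/-- (‡‡): if every vertex has countably infinitely many children, then for each
`θ ∈ (0,∞)` and `u ∈ V` there is a family `{λ_v}_{v∈Des(u)}` of positive reals,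
all lying in `(0,1)` except possibly `λ_u = √θ`, such that `λ_u² = θ`,
`(Σ_{w∈Chi(v)} λ_w²) λ_v² = 1` and `Σ_{w∈Chi(v)} λ_w⁴ ≤ 1` for every `v ∈ Des(u)`. -/
theorem stmt15 {V : Type} (T : DirectedTree V)
    (h : ∀ u : V, (T.chi u).Countable ∧ (T.chi u).Infinite)
    (θ : ℝ) (hθ : 0 < θ) (u : V) :
    ∃ lam : V → ℝ, (∀ v ∈ T.desc u, 0 < lam v) ∧ lam u ^ 2 = θ ∧
      (∀ w ∈ T.desc u, w ≠ u → lam w < 1) ∧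
      ∀ v ∈ T.desc u,
        Summable (fun w : T.chi v => lam (w:V) ^ 2) ∧
        (∑' w : T.chi v, lam (w:V) ^ 2) * lam v ^ 2 = 1 ∧
        Summable (fun w : T.chi v => lam (w:V) ^ 4) ∧
        (∑' w : T.chi v, lam (w:V) ^ 4) ≤ 1 := by
  classical
  obtain ⟨lam, hkey⟩ : ∃ lam : V → ℝ, lam = fun v => Real.sqrt (Stmt15Aux.cfun T h θ u v) :=
    ⟨_, rfl⟩
  have hcpos : ∀ v, 0 < Stmt15Aux.cfun T h θ u v := Stmt15Aux.cfun_pos T h hθ u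
  have hlamsq : ∀ v, lam v ^ 2 = Stmt15Aux.cfun T h θ u v := by
    intro v; rw [hkey]; exact Real.sq_sqrt (hcpos v).le
  have hlam4 : ∀ v, lam v ^ 4 = Stmt15Aux.cfun T h θ u v ^ 2 := by
    intro v
    rw [show (4:ℕ) = 2*2 from rfl, pow_mul, hlamsq v]
  refine ⟨lam, ?_, ?_, ?_, ?_⟩
  · intro v _
    rw [hkey]
    exact Real.sqrt_pos.mpr (hcpos v)
  · rw [hlamsq, Stmt15Aux.cfun_u]
  · intro w hw hne
    have hw' : ∃ n, Stmt15Aux.iter T n u w := (Stmt15Aux.reflTransGen_iff_iter T).mp hw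
    have hlt := Stmt15Aux.cfun_lt_one T h hθ hw' hne
    rw [hkey]
    calc Real.sqrt (Stmt15Aux.cfun T h θ u w) < Real.sqrt 1 :=
          Real.sqrt_lt_sqrt (hcpos w).le hlt
      _ = 1 := Real.sqrt_one
  · intro v hv
    have hv' : ∃ n, Stmt15Aux.iter T n u v := (Stmt15Aux.reflTransGen_iff_iter T).mp hv
    set cv := Stmt15Aux.cfun T h θ u v with hcv
    have hcvpos : 0 < cv := hcpos v
    have key : ∀ w : T.chi v, lam (w:V) ^ 2 = Stmt15Aux2.q cv (Stmt15Aux.enum T h v w) := by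
      intro w
      rw [hlamsq, Stmt15Aux.cfun_child T h θ hv' w.2, Stmt15Aux.num_eq T h w.2]
    have key4 : ∀ w : T.chi v, lam (w:V) ^ 4 = Stmt15Aux2.q cv (Stmt15Aux.enum T h v w) ^ 2 := by
      intro w
      rw [hlam4, Stmt15Aux.cfun_child T h θ hv' w.2, Stmt15Aux.num_eq T h w.2]
    have heq2 : (fun w : T.chi v => lam (w:V) ^ 2)
        = (Stmt15Aux2.q cv) ∘ (Stmt15Aux.enum T h v) := funext key
    have heq4 : (fun w : T.chi v => lam (w:V) ^ 4)
        = (fun j => Stmt15Aux2.q cv j ^ 2) ∘ (Stmt15Aux.enum T h v) := funext key4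
    refine ⟨?_, ?_, ?_, ?_⟩
    · rw [heq2]
      exact ((Stmt15Aux.enum T h v).summable_iff).mpr (Stmt15Aux2.q_summable hcvpos)
    · have ht : (∑' w : T.chi v, lam (w:V) ^ 2) = 1 / cv := by
        rw [heq2]
        exact ((Stmt15Aux.enum T h v).tsum_eq (Stmt15Aux2.q cv)).trans
          (Stmt15Aux2.q_tsum hcvpos)
      rw [ht, hlamsq, ← hcv, one_div, inv_mul_cancel₀ hcvpos.ne']
    · rw [heq4]
      exact ((Stmt15Aux.enum T h v).summable_iff).mpr (Stmt15Aux2.q_sq_summable hcvpos)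
    · have ht : (∑' w : T.chi v, lam (w:V) ^ 4) = ∑' j, Stmt15Aux2.q cv j ^ 2 := by
        rw [heq4]
        exact (Stmt15Aux.enum T h v).tsum_eq (fun j => Stmt15Aux2.q cv j ^ 2)
      rw [ht]
      exact Stmt15Aux2.q_sq_tsum_le hcvpos
end
end
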